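/- arXiv:2304.07859 — 5 statements merged into one kernel-verified Lean document; each statement's English description precedes it below -/
import Mathlib

section
/- For a convex body K in R^n, m ∈ N, r > 0, and a direction θ̄ = (θ_1,...,θ_m) ∈ S^{nm-1}, the intersection K ∩ (K + rθ_1) ∩ ... ∩ (K + rθ_m) equals the Wulff shape (Alexandrov body) of the function u ↦ h_K(u) - r·max_{1≤i≤m} ⟨u, θ_i⟩_-, where ⟨u,θ⟩_- denotes the negative part of the inner product. -/
open MeasureTheory Set Pointwise Metric
open scoped RealInnerProductSpace ENNReal NNReal

noncomputable section

/-- `R^n` as Euclidean space. -/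
abbrev En (n : ℕ) : Type := EuclideanSpace ℝ (Fin n)

/-- `(R^n)^m = R^{nm}` with its Euclidean structure. -/
abbrev Enm (n m : ℕ) : Type := PiLp 2 (fun _ : Fin m => En n)

instance (n m : ℕ) : MeasurableSpace (Enm n m) := MeasurableSpace.comap WithLp.ofLp MeasurableSpace.pi
instance (n m : ℕ) : BorelSpace (Enm n m) := PiLp.borelSpace 2

/-- The negative part `t_- = max{0, -t}`. -/
def negpt (t : ℝ) : ℝ := max 0 (-t)

/-- The `m`-th higher-order difference body
`D^m(K) = {(x_1,…,x_m) : K ∩ ⋂ᵢ (xᵢ + K) ≠ ∅}`. -/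
def higherDiff {n m : ℕ} (K : Set (En n)) : Set (Enm n m) :=
  {x | (K ∩ ⋂ i, (x i +ᵥ K)).Nonempty}

/-- The `m`-covariogram `g_{K,m}(x̄) = Vol_n(K ∩ ⋂ᵢ (xᵢ + K))`. -/
def covariogram {n m : ℕ} (K : Set (En n)) (x : Enm n m) : ℝ :=
  (volume (K ∩ ⋂ i, (x i +ᵥ K))).toReal

/-- `C_θ̄ = conv([0,θ_1] ∪ ⋯ ∪ [0,θ_m])`. -/
def Cbody {n m : ℕ} (θ : Enm n m) : Set (En n) :=
  convexHull ℝ (insert 0 (Set.range fun i => θ i))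

/-- Support function `h_K(u) = sup_{y ∈ K} ⟨u, y⟩`. -/
def suppFn {n : ℕ} (K : Set (En n)) (u : En n) : ℝ :=
  sSup ((fun y => ⟪u, y⟫) '' K)

/-- `n·V(K[n-1], L)`, the first variation of volume:
`nV(K[n-1],L) = d/dε Vol_n(K + εL)|_{ε=0⁺}`. -/
def nMixed {n : ℕ} (K L : Set (En n)) : ℝ :=
  derivWithin (fun ε : ℝ => (volume (K + ε • L)).toReal) (Set.Ici 0) 0

/-- Support function of the higher-order projection body:
`h_{Π^m K}(θ̄) = n V(K[n-1], C_{-θ̄})`. -/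
def projSupport {n : ℕ} (m : ℕ) (K : Set (En n)) (θ : Enm n m) : ℝ :=
  nMixed K (Cbody (-θ))

/-- The `m`-th higher-order projection body `Π^m K`. -/
def projBody {n : ℕ} (m : ℕ) (K : Set (En n)) : Set (Enm n m) :=
  {x | ∀ θ : Enm n m, ⟪x, θ⟫ ≤ projSupport m K θ}

/-- The polar of the higher-order projection body, `Π^{∘,m} K = {h_{Π^m K} ≤ 1}`. -/
def polarProjBody {n : ℕ} (m : ℕ) (K : Set (En n)) : Set (Enm n m) :=
  {x | projSupport m K x ≤ 1}

/-- Support function of the higher-order centroid body. -/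
def centroidSupport {n m : ℕ} (L : Set (Enm n m)) (θ : En n) : ℝ :=
  (volume L).toReal⁻¹ * ∫ x in L, (⨆ i, negpt ⟪(x : Enm n m) i, θ⟫)

/-- The `m`-th higher-order centroid body `Γ^m L`. -/
def centroidBody {n m : ℕ} (L : Set (Enm n m)) : Set (En n) :=
  {y | ∀ θ : En n, ⟪y, θ⟫ ≤ centroidSupport L θ}

/-- Radial function of a star-shaped set. -/
def radialFn {V : Type*} [SMul ℝ V] (A : Set V) (y : V) : ℝ :=
  sSup {r : ℝ | 0 < r ∧ r • y ∈ A}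

/-- `K` is an `n`-dimensional simplex. -/
def IsSimplexBody {n : ℕ} (K : Set (En n)) : Prop :=
  ∃ v : Fin (n + 1) → En n, AffineIndependent ℝ v ∧ K = convexHull ℝ (Set.range v)

/-- The Wulff shape (Alexandrov body) of a function on the unit sphere. -/
def wulff {n : ℕ} (f : En n → ℝ) : Set (En n) :=
  ⋂ u ∈ sphere (0 : En n) 1, {x : En n | ⟪x, u⟫ ≤ f u}


lemma inner_le_suppFn' {n : ℕ} {K : Set (En n)} (hK : IsCompact K) {y : En n}
    (hy : y ∈ K) (u : En n) : ⟪u, y⟫ ≤ suppFn K u := by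
  refine le_csSup ?_ ⟨y, hy, rfl⟩
  exact (hK.image (continuous_const.inner continuous_id)).bddAbove

lemma suppFn_le' {n : ℕ} {K : Set (En n)} (hne : K.Nonempty) {u : En n} {c : ℝ}
    (h : ∀ y ∈ K, ⟪u, y⟫ ≤ c) : suppFn K u ≤ c := by
  refine csSup_le (hne.image _) ?_
  rintro _ ⟨y, hy, rfl⟩
  exact h y hy

lemma mem_of_forall_inner_le' {n : ℕ} {K : Set (En n)} (hK₁ : IsCompact K)
    (hK₂ : Convex ℝ K) (hne : K.Nonempty) {x : En n}
    (h : ∀ u : En n, ‖u‖ = 1 → ⟪x, u⟫ ≤ suppFn K u) : x ∈ K := by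
  by_contra hx
  obtain ⟨f, s, hfs, hsx⟩ := geometric_hahn_banach_closed_point hK₂ hK₁.isClosed hx
  set v := (InnerProductSpace.toDual ℝ (En n)).symm f with hv
  have hfv : ∀ a, f a = ⟪v, a⟫ := fun a =>
    (InnerProductSpace.toDual_symm_apply (y := f) (x := a)).symm
  obtain ⟨a, ha⟩ := id hne
  have hva : (f a : ℝ) < f x := lt_trans (hfs a ha) hsx
  have hvne : v ≠ 0 := by
    intro h0
    rw [hfv a, hfv x, h0] at hva
    simp at hva
  have hvnorm : (0:ℝ) < ‖v‖ := norm_pos_iff.mpr hvne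
  set u : En n := ‖v‖⁻¹ • v with hu
  have hunorm : ‖u‖ = 1 := by
    rw [hu, norm_smul, norm_inv, norm_norm]
    field_simp
  have hsupp : suppFn K u ≤ ‖v‖⁻¹ * s := by
    refine suppFn_le' hne fun y hy => ?_
    rw [hu, real_inner_smul_left]
    have := (hfs y hy).le
    rw [hfv y] at this
    exact mul_le_mul_of_nonneg_left this (inv_nonneg.mpr hvnorm.le)
  have hxu : ⟪x, u⟫ = ‖v‖⁻¹ * f x := by
    rw [hu, real_inner_smul_right, real_inner_comm, ← hfv x]
  have := h u hunorm
  rw [hxu] at this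
  have : ‖v‖⁻¹ * f x ≤ ‖v‖⁻¹ * s := le_trans this hsupp
  have hlt : ‖v‖⁻¹ * s < ‖v‖⁻¹ * f x :=
    mul_lt_mul_of_pos_left hsx (inv_pos.mpr hvnorm)
  linarith

/-- `K ∩ (K + rθ_1) ∩ ⋯ ∩ (K + rθ_m)` is the Wulff shape of
`u ↦ h_K(u) - r·max_i ⟨u, θ_i⟩_-`. -/
theorem inter_eq_wulff (n m : ℕ) (hn : 0 < n) (hm : 0 < m)
    (K : Set (En n)) (hK₁ : IsCompact K) (hK₂ : Convex ℝ K)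
    (hK₃ : (interior K).Nonempty)
    (r : ℝ) (hr : 0 < r) (θ : Enm n m) (hθ : ‖θ‖ = 1) :
    K ∩ ⋂ i, ((r • θ i) +ᵥ K)
      = wulff (fun u => suppFn K u - r * ⨆ i, negpt ⟪u, θ i⟫) := by
  haveI : Nonempty (Fin m) := Fin.pos_iff_nonempty.mp hm
  have hne : K.Nonempty := hK₃.mono interior_subset
  have hvadd : ∀ (v x : En n), x ∈ v +ᵥ K ↔ x - v ∈ K := by
    intro v x
    rw [Set.mem_vadd_set_iff_neg_vadd_mem, vadd_eq_add, neg_add_eq_sub]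
  ext x
  simp only [wulff, Set.mem_iInter, Set.mem_inter_iff, Set.mem_setOf_eq,
    mem_sphere_iff_norm, sub_zero]
  constructor
  · rintro ⟨hxK, hxi⟩ u hu
    have hbdd : BddAbove (Set.range fun i => negpt ⟪u, θ i⟫) :=
      (Set.finite_range _).bddAbove
    obtain ⟨i₀, hi₀⟩ := Finite.exists_max (fun i => negpt ⟪u, θ i⟫)
    have hsup : (⨆ i, negpt ⟪u, θ i⟫) = negpt ⟪u, θ i₀⟫ :=
      le_antisymm (ciSup_le hi₀) (le_ciSup hbdd i₀)
    rw [hsup]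
    rcases le_or_gt (-⟪u, θ i₀⟫) 0 with ht | ht
    · have : negpt ⟪u, θ i₀⟫ = 0 := max_eq_left ht
      rw [this, mul_zero, sub_zero]
      have := inner_le_suppFn' hK₁ hxK u
      rw [real_inner_comm] at this
      exact this
    · have hneg : negpt ⟪u, θ i₀⟫ = -⟪u, θ i₀⟫ := max_eq_right ht.le
      have hx0 : x - r • θ i₀ ∈ K := (hvadd _ _).mp (hxi i₀)
      have := inner_le_suppFn' hK₁ hx0 u
      rw [inner_sub_right, real_inner_smul_right] at this
      rw [hneg, real_inner_comm]
      linarith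
  · intro h
    constructor
    · refine mem_of_forall_inner_le' hK₁ hK₂ hne fun u hu => ?_
      have hbdd : BddAbove (Set.range fun i => negpt ⟪u, θ i⟫) :=
        (Set.finite_range _).bddAbove
      have hS : (0:ℝ) ≤ ⨆ i, negpt ⟪u, θ i⟫ :=
        le_trans (le_max_left 0 _) (le_ciSup hbdd (Classical.arbitrary _))
      have := h u hu
      nlinarith
    · intro i
      rw [hvadd]
      refine mem_of_forall_inner_le' hK₁ hK₂ hne fun u hu => ?_
      have hbdd : BddAbove (Set.range fun i => negpt ⟪u, θ i⟫) :=
        (Set.finite_range _).bddAbove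
      have hS : negpt ⟪u, θ i⟫ ≤ ⨆ j, negpt ⟪u, θ j⟫ := le_ciSup hbdd i
      have hS2 : -⟪u, θ i⟫ ≤ ⨆ j, negpt ⟪u, θ j⟫ :=
        le_trans (le_max_right 0 _) hS
      have hh := h u hu
      rw [inner_sub_left, real_inner_smul_left, real_inner_comm u (θ i)]
      nlinarith
end
end

section
/- For a convex body K in R^n, m ∈ N, and T ∈ GL_n(R), the higher-order projection body satisfies Π^m(TK) = |det T| · T̄^{-t}(Π^m K), where T̄ acts on (R^n)^m coordinatewise by T and T̄^{-t} denotes the inverse transpose applied coordinatewise. -/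
open MeasureTheory Set Pointwise Metric
open scoped RealInnerProductSpace ENNReal NNReal

noncomputable section

lemma aux_derivWithin_const_mul {c : ℝ} (hc : c ≠ 0) (f : ℝ → ℝ) :
    derivWithin (fun t => c * f t) (Set.Ici 0) 0 = c * derivWithin f (Set.Ici 0) 0 := by
  have hu : UniqueDiffWithinAt ℝ (Set.Ici (0:ℝ)) 0 := uniqueDiffOn_Ici 0 0 Set.self_mem_Ici
  by_cases hf : DifferentiableWithinAt ℝ f (Set.Ici 0) 0
  · exact derivWithin_const_mul c hf
  · rw [derivWithin_zero_of_not_differentiableWithinAt hf, mul_zero,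
      derivWithin_zero_of_not_differentiableWithinAt]
    intro h
    apply hf
    have h2 := h.const_mul c⁻¹
    have : (fun t => c⁻¹ * (c * f t)) = f := by
      funext t; rw [← mul_assoc, inv_mul_cancel₀ hc, one_mul]
    rwa [this] at h2

lemma projSupport_image (n m : ℕ) (K : Set (En n)) (T : En n ≃ₗ[ℝ] En n) (θ : Enm n m) :
    projSupport m (⇑T '' K) θ
      = |LinearMap.det (T : En n →ₗ[ℝ] En n)| *
        projSupport m K (WithLp.toLp 2 fun i => T.symm (θ i)) := by
  have hC : Cbody (-θ) = ⇑T '' Cbody (-(WithLp.toLp 2 fun i => T.symm (θ i) : Enm n m)) := by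
    unfold Cbody
    rw [← LinearEquiv.coe_coe T, LinearMap.image_convexHull, Set.image_insert_eq, map_zero,
      ← Set.range_comp]
    have h1 : (⇑(T : En n →ₗ[ℝ] En n) ∘ fun i : Fin m =>
          (-(WithLp.toLp 2 fun i => T.symm (θ i) : Enm n m)) i) = fun i : Fin m => (-θ) i := by
      funext i
      simp
    rw [h1]
  have hvol : ∀ ε : ℝ,
      (volume (⇑T '' K + ε • Cbody (-θ))).toReal
        = |LinearMap.det (T : En n →ₗ[ℝ] En n)| *
          (volume (K + ε • Cbody (-(WithLp.toLp 2 fun i => T.symm (θ i) : Enm n m)))).toReal := by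
    intro ε
    rw [hC, ← image_smul_set T ε, ← Set.image_add, ← LinearEquiv.coe_coe T,
      Measure.addHaar_image_linearMap, ENNReal.toReal_mul, ENNReal.toReal_ofReal (abs_nonneg _)]
  unfold projSupport nMixed
  rw [show (fun ε : ℝ => (volume (⇑T '' K + ε • Cbody (-θ))).toReal)
      = fun ε : ℝ => |LinearMap.det (T : En n →ₗ[ℝ] En n)| *
          (volume (K + ε • Cbody (-(WithLp.toLp 2 fun i => T.symm (θ i) : Enm n m)))).toReal from funext hvol]
  exact aux_derivWithin_const_mul (abs_ne_zero.mpr T.isUnit_det'.ne_zero) _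

/-- `Π^m(TK) = |det T| · T̄^{-t}(Π^m K)` for `T ∈ GL_n(ℝ)`,
where `T̄^{-t}` acts coordinatewise by the inverse transpose (adjoint of the inverse). -/
theorem projBody_image_linearEquiv (n m : ℕ) (hn : 0 < n) (hm : 0 < m)
    (K : Set (En n)) (hK₁ : IsCompact K) (hK₂ : Convex ℝ K)
    (hK₃ : (interior K).Nonempty) (T : En n ≃ₗ[ℝ] En n) :
    projBody m (⇑T '' K)
      = |LinearMap.det (T : En n →ₗ[ℝ] En n)| •
          ((fun x : Enm n m =>
            (WithLp.toLp 2 fun i => LinearMap.adjoint (T.symm : En n →ₗ[ℝ] En n) (x i) : Enm n m))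
            '' projBody m K) := by
  set c := |LinearMap.det (T : En n →ₗ[ℝ] En n)| with hcdef
  have hc0 : 0 < c := abs_pos.mpr T.isUnit_det'.ne_zero
  have hadj : ∀ v : En n,
      LinearMap.adjoint (T.symm : En n →ₗ[ℝ] En n)
        (LinearMap.adjoint (T : En n →ₗ[ℝ] En n) v) = v := by
    intro v
    refine ext_inner_right ℝ fun w => ?_
    rw [LinearMap.adjoint_inner_left, LinearMap.adjoint_inner_left]
    simp
  ext x
  constructor
  · intro hx
    obtain ⟨y, hy⟩ : ∃ y : Enm n m,
        ∀ i, y i = c⁻¹ • LinearMap.adjoint (T : En n →ₗ[ℝ] En n) (x i) :=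
        ⟨WithLp.toLp 2 fun i => c⁻¹ • LinearMap.adjoint (T : En n →ₗ[ℝ] En n) (x i), fun _ => rfl⟩
    have hymem : y ∈ projBody m K := by
      intro φ
      obtain ⟨θ, hθi⟩ : ∃ θ : Enm n m,
          ∀ i, θ i = (T : En n →ₗ[ℝ] En n) (φ i) :=
            ⟨WithLp.toLp 2 fun i => (T : En n →ₗ[ℝ] En n) (φ i), fun _ => rfl⟩
      have hθ := hx θ
      rw [projSupport_image] at hθ
      have hφ : (fun i => T.symm (θ i)) = φ := by
        funext i; rw [hθi]; exact T.symm_apply_apply _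
      rw [hφ] at hθ
      have hinner : ⟪y, φ⟫ = c⁻¹ * ⟪x, θ⟫ := by
        rw [PiLp.inner_apply, PiLp.inner_apply, Finset.mul_sum]
        congr 1
        funext i
        rw [hy i, hθi, real_inner_smul_left, LinearMap.adjoint_inner_left]
      rw [hinner]
      calc c⁻¹ * ⟪x, θ⟫ ≤ c⁻¹ * (c * projSupport m K φ) :=
            mul_le_mul_of_nonneg_left hθ (inv_nonneg.mpr hc0.le)
        _ = projSupport m K φ := by rw [← mul_assoc, inv_mul_cancel₀ hc0.ne', one_mul]
    refine Set.mem_smul_set.mpr ⟨_, Set.mem_image_of_mem _ hymem, ?_⟩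
    refine PiLp.ext fun i => ?_
    show c • (LinearMap.adjoint (T.symm : En n →ₗ[ℝ] En n) (y i)) = x i
    rw [hy i, _root_.map_smul, hadj, smul_smul, mul_inv_cancel₀ hc0.ne', one_smul]
  · rintro ⟨z, ⟨y, hy, rfl⟩, rfl⟩
    obtain ⟨w, hw⟩ : ∃ w : Enm n m,
        ∀ i, w i = LinearMap.adjoint (T.symm : En n →ₗ[ℝ] En n) (y i) :=
        ⟨WithLp.toLp 2 fun i => LinearMap.adjoint (T.symm : En n →ₗ[ℝ] En n) (y i), fun _ => rfl⟩
    have hz : (fun x => c • x) ((fun x : Enm n m =>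
        (WithLp.toLp 2 fun i => LinearMap.adjoint (T.symm : En n →ₗ[ℝ] En n) (x i) : Enm n m)) y) = c • w := by
      refine PiLp.ext fun i => ?_
      show c • (LinearMap.adjoint (T.symm : En n →ₗ[ℝ] En n) (y i)) = c • w i
      rw [hw i]
    rw [hz]
    intro θ
    rw [projSupport_image]
    obtain ⟨φ, hφi⟩ : ∃ φ : Enm n m, ∀ i, φ i = T.symm (θ i) :=
      ⟨WithLp.toLp 2 fun i => T.symm (θ i), fun _ => rfl⟩
    have hφ : (fun i => T.symm (θ i)) = φ := funext fun i => (hφi i).symm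
    rw [hφ]
    have hinner : ⟪c • w, θ⟫ = c * ⟪y, φ⟫ := by
      rw [real_inner_smul_left, PiLp.inner_apply, PiLp.inner_apply]
      congr 1
      exact Finset.sum_congr rfl fun i _ => by
        rw [hw i, LinearMap.adjoint_inner_left, hφi i]; rfl
    rw [hinner]
    exact mul_le_mul_of_nonneg_left (hy _) hc0.le
end
end

section
/- For T ∈ GL_n(R), m ∈ N, and a compact set L ⊂ R^{nm} with positive volume, the higher-order centroid body satisfies Γ^m(T̄ L) = T(Γ^m L), where T̄ acts on R^{nm} coordinatewise by T. -/
open MeasureTheory Set Pointwise Metric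
open scoped RealInnerProductSpace ENNReal NNReal

noncomputable section

/-- Auxiliary: the support function of the centroid body of the image. -/
lemma centroidSupport_image_aux (n m : ℕ) (L : Set (Enm n m)) (hL : IsCompact L)
    (T : En n ≃ₗ[ℝ] En n) (θ : En n) :
    centroidSupport ((fun x : Enm n m => (WithLp.toLp 2 (fun i => T (x i)) : Enm n m)) '' L) θ
      = centroidSupport L (LinearMap.adjoint T.toLinearMap θ) := by
  classical
  set Tb : Enm n m ≃ₗ[ℝ] Enm n m := ((WithLp.linearEquiv 2 ℝ (Fin m → En n)).trans (LinearEquiv.piCongrRight (fun _ : Fin m => T))).trans (WithLp.linearEquiv 2 ℝ (Fin m → En n)).symm with hTb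
  have hfun : (fun x : Enm n m => (WithLp.toLp 2 (fun i => T (x i)) : Enm n m)) = ⇑Tb := by
    funext x; rfl
  haveI : ContinuousSMul ℝ (Enm n m) := inferInstance
  set Tc : Enm n m ≃L[ℝ] Enm n m := Tb.toContinuousLinearEquiv with hTc
  set D : ℝ := |LinearMap.det (Tb : Enm n m →ₗ[ℝ] Enm n m)| with hD
  have hDpos : 0 < D := by
    rw [hD, abs_pos, ← LinearEquiv.coe_det]
    exact (LinearEquiv.det Tb).ne_zero
  have hvol : volume (⇑Tb '' L) = ENNReal.ofReal D * volume L :=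
    Measure.addHaar_image_linearMap _ _ _
  have hint : ∫ x in ⇑Tb '' L, (⨆ i, negpt ⟪(x : Enm n m) i, θ⟫)
      = ∫ x in L, D • (⨆ i, negpt ⟪(Tb x : Enm n m) i, θ⟫) := by
    have := integral_image_eq_integral_abs_det_fderiv_smul (μ := volume)
      hL.measurableSet (f' := fun _ => (Tc : Enm n m →L[ℝ] Enm n m))
      (fun x _ => (Tc.hasFDerivAt (x := x)).hasFDerivWithinAt) (Tb.injective.injOn)
      (fun x : Enm n m => ⨆ i, negpt ⟪(x : Enm n m) i, θ⟫)
    convert this using 3 <;> rfl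
  rw [hfun]
  unfold centroidSupport
  rw [hvol, hint]
  have hvL : volume L ≠ ⊤ := hL.measure_lt_top.ne
  have h1 : (ENNReal.ofReal D * volume L).toReal = D * (volume L).toReal := by
    rw [ENNReal.toReal_mul, ENNReal.toReal_ofReal hDpos.le]
  rw [h1, integral_smul]
  have h2 : ∀ x : Enm n m, (⨆ i, negpt ⟪(Tb x : Enm n m) i, θ⟫)
      = ⨆ i, negpt ⟪(x : Enm n m) i, LinearMap.adjoint T.toLinearMap θ⟫ := by
    intro x
    refine iSup_congr fun i => ?_
    rw [LinearMap.adjoint_inner_right]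
    rfl
  simp_rw [h2]
  rw [smul_eq_mul, mul_inv]
  rw [mul_comm D⁻¹, mul_assoc, inv_mul_cancel_left₀ hDpos.ne']

/-- `Γ^m(T̄L) = T(Γ^m L)` for `T ∈ GL_n(ℝ)`. -/
theorem centroidBody_image_linearEquiv (n m : ℕ) (hn : 0 < n) (hm : 0 < m)
    (L : Set (Enm n m)) (hL : IsCompact L) (hLvol : 0 < volume L)
    (T : En n ≃ₗ[ℝ] En n) :
    centroidBody ((fun x : Enm n m => (WithLp.toLp 2 (fun i => T (x i)) : Enm n m)) '' L)
      = ⇑T '' centroidBody L := by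
  classical
  have key : ∀ θ : En n,
      centroidSupport ((fun x : Enm n m => (WithLp.toLp 2 (fun i => T (x i)) : Enm n m)) '' L) θ
        = centroidSupport L (LinearMap.adjoint T.toLinearMap θ) :=
    centroidSupport_image_aux n m L hL T
  have hcomp : LinearMap.adjoint T.toLinearMap ∘ₗ LinearMap.adjoint T.symm.toLinearMap
      = LinearMap.id := by
    rw [← LinearMap.adjoint_comp]
    have : T.symm.toLinearMap ∘ₗ T.toLinearMap = LinearMap.id := by
      ext x; simp
    rw [this]
    exact ((LinearMap.eq_adjoint_iff LinearMap.id LinearMap.id).mpr (fun x y => rfl)).symm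
  ext y
  constructor
  · intro h
    refine ⟨T.symm y, fun φ => ?_, T.apply_symm_apply y⟩
    have h1 := h (LinearMap.adjoint T.symm.toLinearMap φ)
    rw [key] at h1
    have h2 : LinearMap.adjoint T.toLinearMap (LinearMap.adjoint T.symm.toLinearMap φ) = φ := by
      rw [← LinearMap.comp_apply, hcomp, LinearMap.id_apply]
    rw [h2] at h1
    have h3 : ⟪y, LinearMap.adjoint T.symm.toLinearMap φ⟫ = ⟪T.symm y, φ⟫ := by
      rw [LinearMap.adjoint_inner_right]; rfl
    rw [h3] at h1
    exact h1
  · rintro ⟨z, hz, rfl⟩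
    intro θ
    rw [key θ]
    have h1 := hz (LinearMap.adjoint T.toLinearMap θ)
    have h2 : ⟪z, LinearMap.adjoint T.toLinearMap θ⟫ = ⟪T z, θ⟫ := by
      rw [LinearMap.adjoint_inner_right]; rfl
    rw [h2] at h1
    exact h1
end
end

section
/- For a compact set L ⊂ R^{nm} with positive volume, the function θ ↦ ∫_L max_{1≤i≤m} ⟨x_i, θ⟩_- dx̄ on R^n is continuously differentiable away from the origin; consequently, the higher-order centroid body Γ^m L has C^1 support function on R^n \ {0}. -/
open MeasureTheory Set Pointwise Metric
open scoped RealInnerProductSpace ENNReal NNReal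

noncomputable section

/- ### auxiliary lemmas -/

lemma aux_negpt_lip (s t : ℝ) : |negpt s - negpt t| ≤ |s - t| := by
  calc |negpt s - negpt t| = |max (-s) 0 - max (-t) 0| := by
        rw [negpt, negpt, max_comm, max_comm (0:ℝ) (-t)]
    _ ≤ |(-s) - (-t)| := abs_max_sub_max_le_abs _ _ _
    _ = |s - t| := by rw [neg_sub_neg, abs_sub_comm]

lemma aux_ciSup_dist {ι : Type*} [Fintype ι] [Nonempty ι] (a b : ι → ℝ) {C : ℝ}
    (h : ∀ i, |a i - b i| ≤ C) : |(⨆ i, a i) - ⨆ i, b i| ≤ C := by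
  have key : ∀ (a b : ι → ℝ), (∀ i, |a i - b i| ≤ C) → (⨆ i, a i) ≤ (⨆ i, b i) + C := by
    intro a b h
    refine ciSup_le fun i => ?_
    have h1 : a i - b i ≤ C := (abs_le.1 (h i)).2
    have h2 : b i ≤ ⨆ j, b j := le_ciSup (Set.Finite.bddAbove (Set.finite_range b)) i
    linarith
  have h1 := key a b h
  have h2 := key b a fun i => by rw [abs_sub_comm]; exact h i
  rw [abs_le]; constructor <;> linarith

lemma aux_coord_le {n m : ℕ} (x : Enm n m) (i : Fin m) : ‖x i‖ ≤ ‖x‖ := by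
  have h1 : ‖x‖ ^ 2 = ∑ j, ‖x j‖ ^ 2 := PiLp.norm_sq_eq_of_L2 _ x
  have h2 : ‖x i‖ ^ 2 ≤ ∑ j, ‖x j‖ ^ 2 :=
    Finset.single_le_sum (f := fun j => ‖x j‖ ^ 2) (fun j _ => sq_nonneg _) (Finset.mem_univ i)
  nlinarith [norm_nonneg x, norm_nonneg (x i)]

lemma aux_g_lip_theta {n m : ℕ} [Nonempty (Fin m)] (x : Enm n m) (θ θ' : En n) :
    |(⨆ i, negpt ⟪x i, θ⟫) - ⨆ i, negpt ⟪x i, θ'⟫| ≤ ‖x‖ * ‖θ - θ'‖ := by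
  refine aux_ciSup_dist _ _ fun i => ?_
  calc |negpt ⟪x i, θ⟫ - negpt ⟪x i, θ'⟫| ≤ |⟪x i, θ⟫ - ⟪x i, θ'⟫| := aux_negpt_lip _ _
    _ = |⟪x i, θ - θ'⟫| := by rw [← inner_sub_right]
    _ ≤ ‖x i‖ * ‖θ - θ'‖ := abs_real_inner_le_norm _ _
    _ ≤ ‖x‖ * ‖θ - θ'‖ := by gcongr; exact aux_coord_le x i

lemma aux_g_lip_x {n m : ℕ} [Nonempty (Fin m)] (θ : En n) (x y : Enm n m) :
    |(⨆ i, negpt ⟪x i, θ⟫) - ⨆ i, negpt ⟪y i, θ⟫| ≤ ‖θ‖ * ‖x - y‖ := by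
  refine aux_ciSup_dist _ _ fun i => ?_
  calc |negpt ⟪x i, θ⟫ - negpt ⟪y i, θ⟫| ≤ |⟪x i, θ⟫ - ⟪y i, θ⟫| := aux_negpt_lip _ _
    _ = |⟪x i - y i, θ⟫| := by rw [← inner_sub_left]
    _ ≤ ‖x i - y i‖ * ‖θ‖ := abs_real_inner_le_norm _ _
    _ ≤ ‖x - y‖ * ‖θ‖ := by
        gcongr
        exact aux_coord_le (x - y) i
    _ = ‖θ‖ * ‖x - y‖ := mul_comm _ _

lemma aux_g_cont {n m : ℕ} [Nonempty (Fin m)] (θ : En n) :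
    Continuous fun x : Enm n m => ⨆ i, negpt ⟪x i, θ⟫ := by
  refine (LipschitzWith.of_dist_le_mul (K := ‖θ‖₊) fun x y => ?_).continuous
  rw [Real.dist_eq, dist_eq_norm]
  simpa using aux_g_lip_x θ x y

/-- The set where the derivative is `-⟪x i, ·⟫`. -/
def Pset (n m : ℕ) (θ : En n) (i : Fin m) : Set (Enm n m) :=
  {x | 0 < -⟪x i, θ⟫ ∧ ∀ j, j ≠ i → -⟪x j, θ⟫ < -⟪x i, θ⟫}

/-- Candidate derivative of `θ ↦ ⨆ i, negpt ⟪x i, θ⟫`. -/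
def Fp (n m : ℕ) (θ : En n) (x : Enm n m) : En n →L[ℝ] ℝ :=
  ∑ i, Set.indicator (Pset n m θ i) (fun x => -(innerSL ℝ (x i))) x

lemma Pset_excl {n m : ℕ} {θ : En n} {i j : Fin m} (hij : j ≠ i) {x : Enm n m}
    (hi : x ∈ Pset n m θ i) : x ∉ Pset n m θ j := by
  intro hj
  exact absurd (hj.2 i (fun h => hij h.symm)) (not_lt.2 (hi.2 j hij).le)

lemma Fp_eq_of_mem {n m : ℕ} {θ : En n} {i : Fin m} {x : Enm n m} (h : x ∈ Pset n m θ i) :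
    Fp n m θ x = -(innerSL ℝ (x i)) := by
  rw [Fp, Finset.sum_eq_single_of_mem i (Finset.mem_univ i)
    (fun j _ hj => Set.indicator_of_notMem (Pset_excl hj h) _), Set.indicator_of_mem h]

lemma Fp_eq_zero {n m : ℕ} {θ : En n} {x : Enm n m} (h : ∀ i, x ∉ Pset n m θ i) :
    Fp n m θ x = 0 :=
  Finset.sum_eq_zero fun i _ => Set.indicator_of_notMem (h i) _

lemma Fp_norm_le {n m : ℕ} (θ : En n) (x : Enm n m) : ‖Fp n m θ x‖ ≤ ‖x‖ := by
  by_cases h : ∃ i, x ∈ Pset n m θ i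
  · obtain ⟨i, hi⟩ := h
    rw [Fp_eq_of_mem hi, norm_neg, innerSL_apply_norm]
    exact aux_coord_le x i
  · push_neg at h
    rw [Fp_eq_zero h]
    simpa using norm_nonneg x

lemma aux_inner_coord_cont {n m : ℕ} (θ : En n) (i : Fin m) :
    Continuous fun x : Enm n m => ⟪x i, θ⟫ :=
  Continuous.inner (PiLp.proj (𝕜 := ℝ) 2 (fun _ : Fin m => En n) i).continuous continuous_const

lemma Pset_measurable {n m : ℕ} (θ : En n) (i : Fin m) : MeasurableSet (Pset n m θ i) := by
  have h1 : ∀ j : Fin m, Continuous fun x : Enm n m => -⟪x j, θ⟫ :=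
    fun j => (aux_inner_coord_cont θ j).neg
  have heq : Pset n m θ i =
      {x : Enm n m | 0 < -⟪x i, θ⟫} ∩ ⋂ j, {x : Enm n m | j ≠ i → -⟪x j, θ⟫ < -⟪x i, θ⟫} := by
    ext x; simp only [Pset, Set.mem_setOf_eq, Set.mem_inter_iff, Set.mem_iInter]
  rw [heq]
  refine MeasurableSet.inter ?_ (MeasurableSet.iInter fun j => ?_)
  · exact measurableSet_lt measurable_const (h1 i).measurable
  · by_cases hj : j = i
    · subst hj
      simp
    · have : {x : Enm n m | j ≠ i → -⟪x j, θ⟫ < -⟪x i, θ⟫}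
          = {x : Enm n m | -⟪x j, θ⟫ < -⟪x i, θ⟫} := by ext x; simp [hj]
      rw [this]
      exact measurableSet_lt (h1 j).measurable (h1 i).measurable

lemma Fp_meas {n m : ℕ} (θ : En n) : StronglyMeasurable (Fp n m θ) := by
  refine Finset.stronglyMeasurable_fun_sum _ fun i _ =>
    StronglyMeasurable.indicator ?_ (Pset_measurable θ i)
  exact (((innerSL ℝ (E := En n)).continuous.comp
    (PiLp.proj (𝕜 := ℝ) 2 (fun _ : Fin m => En n) i).continuous).neg).stronglyMeasurable

/-- Almost every `x` is "good" for `θ₀ ≠ 0`. -/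
lemma aux_ae_good {n m : ℕ} (θ₀ : En n) (hθ₀ : θ₀ ≠ 0) :
    ∀ᵐ x : Enm n m ∂volume,
      (∀ i, ⟪x i, θ₀⟫ ≠ 0) ∧ ∀ i j, i ≠ j → ⟪x i, θ₀⟫ ≠ ⟪x j, θ₀⟫ := by
  have hA : ∀ i : Fin m, volume {x : Enm n m | ⟪x i, θ₀⟫ = 0} = 0 := by
    intro i
    set l : Enm n m →ₗ[ℝ] ℝ :=
      (((innerSL ℝ θ₀).comp (PiLp.proj (𝕜 := ℝ) 2 (fun _ : Fin m => En n) i)) :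
        Enm n m →L[ℝ] ℝ).toLinearMap with hl
    have hset : {x : Enm n m | ⟪x i, θ₀⟫ = 0} = (LinearMap.ker l : Set (Enm n m)) := by
      ext x
      simp only [SetLike.mem_coe, LinearMap.mem_ker, hl, ContinuousLinearMap.coe_coe,
        ContinuousLinearMap.comp_apply, PiLp.proj_apply, innerSL_apply_apply, Set.mem_setOf_eq]
      rw [real_inner_comm]
    rw [hset]
    refine Measure.addHaar_submodule _ _ ?_
    rw [Ne, LinearMap.ker_eq_top]
    intro h0
    have hwl : l ((WithLp.equiv 2 _).symm (Pi.single i θ₀)) = ⟪θ₀, θ₀⟫ := by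
      simp only [hl, ContinuousLinearMap.coe_coe, ContinuousLinearMap.comp_apply,
        PiLp.proj_apply, innerSL_apply_apply, WithLp.equiv_symm_apply, WithLp.ofLp_toLp, Pi.single_eq_same]
    rw [h0] at hwl
    simp only [LinearMap.zero_apply] at hwl
    exact hθ₀ (inner_self_eq_zero.1 hwl.symm)
  have hC : ∀ i j : Fin m, i ≠ j → volume {x : Enm n m | ⟪x i, θ₀⟫ = ⟪x j, θ₀⟫} = 0 := by
    intro i j hij
    set l : Enm n m →ₗ[ℝ] ℝ :=
      (((innerSL ℝ θ₀).comp ((PiLp.proj (𝕜 := ℝ) 2 (fun _ : Fin m => En n) i)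
          - (PiLp.proj (𝕜 := ℝ) 2 (fun _ : Fin m => En n) j))) : Enm n m →L[ℝ] ℝ).toLinearMap with hl
    have hset : {x : Enm n m | ⟪x i, θ₀⟫ = ⟪x j, θ₀⟫} = (LinearMap.ker l : Set (Enm n m)) := by
      ext x
      simp only [SetLike.mem_coe, LinearMap.mem_ker, hl, ContinuousLinearMap.coe_coe,
        ContinuousLinearMap.comp_apply, ContinuousLinearMap.sub_apply, PiLp.proj_apply,
        innerSL_apply_apply, Set.mem_setOf_eq, inner_sub_right, sub_eq_zero]
      rw [real_inner_comm θ₀ (x i), real_inner_comm θ₀ (x j)]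
    rw [hset]
    refine Measure.addHaar_submodule _ _ ?_
    rw [Ne, LinearMap.ker_eq_top]
    intro h0
    have hwl : l ((WithLp.equiv 2 _).symm (Pi.single i θ₀)) = ⟪θ₀, θ₀⟫ := by
      simp only [hl, ContinuousLinearMap.coe_coe, ContinuousLinearMap.comp_apply,
        ContinuousLinearMap.sub_apply, PiLp.proj_apply, innerSL_apply_apply,
        WithLp.equiv_symm_apply, WithLp.ofLp_toLp, Pi.single_eq_same, Pi.single_eq_of_ne (Ne.symm hij),
        sub_zero]
    rw [h0] at hwl
    simp only [LinearMap.zero_apply] at hwl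
    exact hθ₀ (inner_self_eq_zero.1 hwl.symm)
  rw [ae_iff]
  have hBnull : volume ((⋃ i, {x : Enm n m | ⟪x i, θ₀⟫ = 0}) ∪
      ⋃ i, ⋃ j, {x : Enm n m | i ≠ j ∧ ⟪x i, θ₀⟫ = ⟪x j, θ₀⟫}) = 0 := by
    refine measure_union_null (measure_iUnion_null hA)
      (measure_iUnion_null fun i => measure_iUnion_null fun j => ?_)
    by_cases hij : i = j
    · subst hij
      simp
    · exact measure_mono_null (fun x hx => hx.2) (hC i j hij)
  refine measure_mono_null ?_ hBnull
  · intro x hx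
    simp only [Set.mem_setOf_eq, not_and_or] at hx
    rcases hx with hx | hx
    · push_neg at hx
      obtain ⟨i, hi⟩ := hx
      exact Or.inl (Set.mem_iUnion.2 ⟨i, hi⟩)
    · push_neg at hx
      obtain ⟨i, j, hij, h⟩ := hx
      exact Or.inr (Set.mem_iUnion.2 ⟨i, Set.mem_iUnion.2 ⟨j, hij, h⟩⟩)

lemma aux_hasFDeriv {n m : ℕ} [Nonempty (Fin m)] (θ₀ : En n) (x : Enm n m)
    (hx1 : ∀ i, ⟪x i, θ₀⟫ ≠ 0)
    (hx2 : ∀ i j, i ≠ j → ⟪x i, θ₀⟫ ≠ ⟪x j, θ₀⟫) :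
    HasFDerivAt (fun θ : En n => ⨆ i, negpt ⟪x i, θ⟫) (Fp n m θ₀ x) θ₀ := by
  obtain ⟨i₀, -, hmax⟩ := Finset.exists_max_image Finset.univ
    (fun i : Fin m => -⟪x i, θ₀⟫) ⟨Classical.arbitrary _, Finset.mem_univ _⟩
  have strict : ∀ j, j ≠ i₀ → -⟪x j, θ₀⟫ < -⟪x i₀, θ₀⟫ := fun j hj =>
    lt_of_le_of_ne (hmax j (Finset.mem_univ j)) (fun h => hx2 j i₀ hj (neg_injective h))
  have hcont : ∀ j : Fin m, ContinuousAt (fun θ : En n => -⟪x j, θ⟫) θ₀ :=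
    fun j => ((Continuous.inner continuous_const continuous_id).neg).continuousAt
  rcases lt_trichotomy (-⟪x i₀, θ₀⟫) 0 with hneg | h0 | hpos
  · -- all inner products positive: function locally zero
    have hF : Fp n m θ₀ x = 0 :=
      Fp_eq_zero fun i hi => absurd hi.1 (not_lt.2 ((hmax i (Finset.mem_univ i)).trans hneg.le))
    rw [hF]
    have hev : (fun θ : En n => ⨆ i, negpt ⟪x i, θ⟫) =ᶠ[nhds θ₀] fun _ => 0 := by
      have hall : ∀ i : Fin m, ∀ᶠ θ in nhds θ₀, -⟪x i, θ⟫ < 0 := fun i =>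
        (hcont i).eventually_lt continuousAt_const
          ((hmax i (Finset.mem_univ i)).trans_lt hneg)
      filter_upwards [Filter.eventually_all.2 hall] with θ hθ
      have hz : ∀ i : Fin m, negpt ⟪x i, θ⟫ = 0 := fun i => by
        rw [negpt, max_eq_left (le_of_lt (hθ i))]
      simp only [hz, ciSup_const]
    exact (hasFDerivAt_const (0:ℝ) θ₀).congr_of_eventuallyEq hev
  · exact absurd (neg_eq_zero.1 h0) (hx1 i₀)
  · -- unique positive maximum at i₀
    have hxP : x ∈ Pset n m θ₀ i₀ := ⟨hpos, strict⟩
    rw [Fp_eq_of_mem hxP]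
    have hev : (fun θ : En n => ⨆ i, negpt ⟪x i, θ⟫) =ᶠ[nhds θ₀]
        fun θ => -⟪x i₀, θ⟫ := by
      have E1 : ∀ᶠ θ in nhds θ₀, (0:ℝ) < -⟪x i₀, θ⟫ :=
        continuousAt_const.eventually_lt (hcont i₀) hpos
      have E2 : ∀ j : Fin m, ∀ᶠ θ in nhds θ₀, (j ≠ i₀ → -⟪x j, θ⟫ < -⟪x i₀, θ⟫) := by
        intro j
        by_cases hj : j = i₀
        · exact Filter.Eventually.of_forall fun θ h => absurd hj h
        · filter_upwards [(hcont j).eventually_lt (hcont i₀) (strict j hj)] with θ h _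
          exact h
      filter_upwards [E1, Filter.eventually_all.2 E2] with θ h1 h2
      refine le_antisymm (ciSup_le fun i => ?_) ?_
      · rw [negpt]
        refine max_le h1.le ?_
        by_cases hi : i = i₀
        · rw [hi]
        · exact (h2 i hi).le
      · calc -⟪x i₀, θ⟫ = negpt ⟪x i₀, θ⟫ := (max_eq_right h1.le).symm
          _ ≤ ⨆ i, negpt ⟪x i, θ⟫ :=
              le_ciSup (f := fun i => negpt ⟪x i, θ⟫)
                (Set.Finite.bddAbove (Set.finite_range _)) i₀
    have hlin : HasFDerivAt (fun θ : En n => -⟪x i₀, θ⟫) (-(innerSL ℝ (x i₀))) θ₀ :=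
      ((innerSL ℝ (x i₀)).hasFDerivAt).neg
    exact hlin.congr_of_eventuallyEq hev

lemma aux_Fp_contAt {n m : ℕ} [Nonempty (Fin m)] (θ₀ : En n) (x : Enm n m)
    (hx1 : ∀ i, ⟪x i, θ₀⟫ ≠ 0)
    (hx2 : ∀ i j, i ≠ j → ⟪x i, θ₀⟫ ≠ ⟪x j, θ₀⟫) :
    ContinuousAt (fun θ : En n => Fp n m θ x) θ₀ := by
  obtain ⟨i₀, -, hmax⟩ := Finset.exists_max_image Finset.univ
    (fun i : Fin m => -⟪x i, θ₀⟫) ⟨Classical.arbitrary _, Finset.mem_univ _⟩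
  have strict : ∀ j, j ≠ i₀ → -⟪x j, θ₀⟫ < -⟪x i₀, θ₀⟫ := fun j hj =>
    lt_of_le_of_ne (hmax j (Finset.mem_univ j)) (fun h => hx2 j i₀ hj (neg_injective h))
  have hcont : ∀ j : Fin m, ContinuousAt (fun θ : En n => -⟪x j, θ⟫) θ₀ :=
    fun j => ((Continuous.inner continuous_const continuous_id).neg).continuousAt
  rcases lt_trichotomy (-⟪x i₀, θ₀⟫) 0 with hneg | h0 | hpos
  · refine Filter.EventuallyEq.continuousAt (y := 0) ?_
    have hall : ∀ i : Fin m, ∀ᶠ θ in nhds θ₀, -⟪x i, θ⟫ < 0 := fun i =>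
      (hcont i).eventually_lt continuousAt_const
        ((hmax i (Finset.mem_univ i)).trans_lt hneg)
    filter_upwards [Filter.eventually_all.2 hall] with θ hθ
    exact Fp_eq_zero fun i hi => absurd hi.1 (not_lt.2 (hθ i).le)
  · exact absurd (neg_eq_zero.1 h0) (hx1 i₀)
  · refine Filter.EventuallyEq.continuousAt (y := -(innerSL ℝ (x i₀))) ?_
    have E1 : ∀ᶠ θ in nhds θ₀, (0:ℝ) < -⟪x i₀, θ⟫ :=
      continuousAt_const.eventually_lt (hcont i₀) hpos
    have E2 : ∀ j : Fin m, ∀ᶠ θ in nhds θ₀, (j ≠ i₀ → -⟪x j, θ⟫ < -⟪x i₀, θ⟫) := by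
      intro j
      by_cases hj : j = i₀
      · exact Filter.Eventually.of_forall fun θ h => absurd hj h
      · filter_upwards [(hcont j).eventually_lt (hcont i₀) (strict j hj)] with θ h _
        exact h
    filter_upwards [E1, Filter.eventually_all.2 E2] with θ h1 h2
    exact Fp_eq_of_mem ⟨h1, h2⟩


/-- `θ ↦ ∫_L max_i ⟨x_i, θ⟩_- dx̄` is `C¹` away from the origin; consequently,
the support function of `Γ^m L` is `C¹` on `ℝⁿ \ {0}`. -/
theorem centroidSupport_contDiffOn (n m : ℕ) (hn : 0 < n) (hm : 0 < m)
    (L : Set (Enm n m)) (hL : IsCompact L) (hLvol : 0 < volume L) :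
    ContDiffOn ℝ 1 (fun θ : En n => ∫ x in L, ⨆ i, negpt ⟪(x : Enm n m) i, θ⟫)
        ({(0 : En n)}ᶜ) ∧
      ContDiffOn ℝ 1 (centroidSupport L) ({(0 : En n)}ᶜ) := by
  haveI : Nonempty (Fin m) := ⟨⟨0, hm⟩⟩
  set f : En n → ℝ := fun θ => ∫ x in L, ⨆ i, negpt ⟪(x : Enm n m) i, θ⟫ with hfdef
  have key : ∀ θ₀ : En n, θ₀ ≠ 0 → HasFDerivAt f (∫ x in L, Fp n m θ₀ x) θ₀ := by
    intro θ₀ hθ₀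
    refine (hasFDerivAt_integral_of_dominated_loc_of_lip
      (F := fun (θ : En n) (x : Enm n m) => ⨆ i, negpt ⟪x i, θ⟫)
      (F' := fun x => Fp n m θ₀ x) (bound := fun x : Enm n m => ‖x‖)
      (Metric.ball_mem_nhds θ₀ one_pos) ?_ ?_ ?_ ?_ ?_ ?_).2
    · exact Filter.Eventually.of_forall fun θ =>
        ((aux_g_cont θ).aestronglyMeasurable)
    · exact (aux_g_cont θ₀).continuousOn.integrableOn_compact hL
    · exact (Fp_meas θ₀).aestronglyMeasurable
    · refine Filter.Eventually.of_forall fun x => ?_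
      refine (LipschitzWith.of_dist_le_mul (K := Real.nnabs ‖x‖) fun θ θ' => ?_).lipschitzOnWith
      rw [Real.dist_eq, dist_eq_norm]
      have : ((Real.nnabs ‖x‖ : ℝ≥0) : ℝ) = ‖x‖ := by
        simp [Real.coe_nnabs, abs_norm]
      rw [this]
      exact aux_g_lip_theta x θ θ'
    · exact continuous_norm.continuousOn.integrableOn_compact hL
    · refine ae_restrict_of_ae ?_
      filter_upwards [aux_ae_good θ₀ hθ₀] with x hx
      exact aux_hasFDeriv θ₀ x hx.1 hx.2
  have cont : ∀ θ₀ : En n, θ₀ ≠ 0 →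
      ContinuousAt (fun θ : En n => ∫ x in L, Fp n m θ x) θ₀ := by
    intro θ₀ hθ₀
    refine continuousAt_of_dominated (bound := fun x : Enm n m => ‖x‖) ?_ ?_ ?_ ?_
    · exact Filter.Eventually.of_forall fun θ => (Fp_meas θ).aestronglyMeasurable
    · exact Filter.Eventually.of_forall fun θ =>
        Filter.Eventually.of_forall fun x => Fp_norm_le θ x
    · exact continuous_norm.continuousOn.integrableOn_compact hL
    · refine ae_restrict_of_ae ?_
      filter_upwards [aux_ae_good θ₀ hθ₀] with x hx
      exact aux_Fp_contAt θ₀ x hx.1 hx.2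
  have hdiff : DifferentiableOn ℝ f ({(0 : En n)}ᶜ) := fun θ hθ =>
    ((key θ hθ).differentiableAt).differentiableWithinAt
  have hfd : ∀ θ ∈ ({(0 : En n)}ᶜ : Set (En n)),
      fderiv ℝ f θ = ∫ x in L, Fp n m θ x := fun θ hθ => (key θ hθ).fderiv
  have hco : ContinuousOn (fderiv ℝ f) ({(0 : En n)}ᶜ) := by
    intro θ hθ
    exact ((cont θ hθ).continuousWithinAt).congr hfd (hfd θ hθ)
  have h1 : ContDiffOn ℝ 1 f ({(0 : En n)}ᶜ) := by
    rw [← zero_add (1 : WithTop ℕ∞),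
      contDiffOn_succ_iff_fderiv_of_isOpen isOpen_compl_singleton]
    exact ⟨hdiff, by simp, by rw [contDiffOn_zero]; exact hco⟩
  refine ⟨h1, ?_⟩
  have : centroidSupport L = fun θ => (volume L).toReal⁻¹ * f θ := rfl
  rw [this]
  exact contDiffOn_const.mul h1
end
end

section
/- Let L ⊂ R^{nm} be a compact set with nonempty interior and ξ ∈ S^{n-1}. Then Vol_{nm}(S̄_ξ L) ≥ Vol_{nm}(L), where S̄_ξ is the m-th higher-order Steiner symmetrization. -/
open MeasureTheory Set Pointwise Metric
open scoped RealInnerProductSpace ENNReal NNReal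

noncomputable section

/-- The `m`-th higher-order Steiner symmetral of `L ⊆ R^{nm}` with respect to `ξ`. -/
def steinerM {n m : ℕ} (ξ : En n) (L : Set (Enm n m)) : Set (Enm n m) :=
  {z | ∃ (w : Fin m → En n) (t s : Fin m → ℝ),
    (∀ i, ⟪w i, ξ⟫ = 0) ∧
    (WithLp.toLp 2 (fun i => w i + t i • ξ) ∈ L) ∧
    (WithLp.toLp 2 (fun i => w i + s i • ξ) ∈ L) ∧
    z = fun i => w i + ((t i - s i) / 2) • ξ}


private lemma ennreal_amgm (x y : ℝ≥0∞) : (x * y) ^ (1/2 : ℝ) ≤ (x + y) / 2 := by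
  rcases eq_or_ne x ⊤ with hx | hx
  · rcases eq_or_ne y 0 with hy | hy
    · simp [hy, ENNReal.zero_rpow_of_pos (by norm_num : (0:ℝ) < 1/2)]
    · subst hx
      rw [top_add, ENNReal.top_div_of_ne_top (by norm_num)]
      exact le_top
  rcases eq_or_ne y ⊤ with hy | hy
  · rcases eq_or_ne x 0 with hx0 | hx0
    · simp [hx0, ENNReal.zero_rpow_of_pos (by norm_num : (0:ℝ) < 1/2)]
    · subst hy
      rw [add_top, ENNReal.top_div_of_ne_top (by norm_num)]
      exact le_top
  lift x to ℝ≥0 using hx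
  lift y to ℝ≥0 using hy
  rw [← ENNReal.coe_mul, ← ENNReal.coe_add, ← ENNReal.coe_rpow_of_nonneg _ (by norm_num : (0:ℝ) ≤ 1/2)]
  have h2 : ((2 : ℝ≥0) : ℝ≥0∞) = 2 := by norm_num
  rw [← h2, ← ENNReal.coe_div (by norm_num), ENNReal.coe_le_coe]
  have := NNReal.geom_mean_le_arith_mean2_weighted (1/2) (1/2) x y
    (by rw [← add_div]
        norm_num)
  have hc : ((1/2 : ℝ≥0) : ℝ) = (1/2 : ℝ) := by norm_num
  rw [hc] at this
  calc (x * y) ^ (1/2 : ℝ) = x ^ (1/2:ℝ) * y ^ (1/2:ℝ) := NNReal.mul_rpow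
    _ ≤ (1/2) * x + (1/2) * y := this
    _ = (x + y) / 2 := by
        rw [add_div]; congr 1 <;> rw [one_div, inv_mul_eq_div]

private lemma sumset_one_dim {K K' : Set ℝ} (hK : IsCompact K) (hK' : IsCompact K')
    (hne : K.Nonempty) (hne' : K'.Nonempty) :
    volume K + volume K' ≤ volume (K + K') := by
  set a := sSup K with ha
  set b := sInf K' with hb
  have haK : a ∈ K := hK.sSup_mem hne
  have hbK : b ∈ K' := hK'.sInf_mem hne'
  set U := (fun x => x + b) '' K with hU
  set V := (fun y => a + y) '' K' with hV
  have hUc : IsCompact U := hK.image (continuous_id.add continuous_const)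
  have hVc : IsCompact V := hK'.image (continuous_const.add continuous_id)
  have hUsub : U ⊆ K + K' := by
    rintro _ ⟨x, hx, rfl⟩; exact add_mem_add hx hbK
  have hVsub : V ⊆ K + K' := by
    rintro _ ⟨y, hy, rfl⟩; exact add_mem_add haK hy
  have hInter : U ∩ V ⊆ {a + b} := by
    rintro z ⟨hzU, hzV⟩
    obtain ⟨x, hx, hxe⟩ := hzU
    obtain ⟨y, hy, hye⟩ := hzV
    dsimp only at hxe hye
    have hxa : x ≤ a := le_csSup hK.bddAbove hx
    have hyb : b ≤ y := csInf_le hK'.bddBelow hy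
    have : z = a + b := by linarith
    simp [this]
  have hvolU : volume U = volume K := by
    rw [hU, Set.image_add_right, measure_preimage_add_right]
  have hvolV : volume V = volume K' := by
    rw [hV, Set.image_add_left, measure_preimage_add]
  have hIV : volume (U ∩ V) = 0 :=
    le_antisymm ((measure_mono hInter).trans_eq Real.volume_singleton) zero_le
  have := measure_union_add_inter (μ := volume) U hVc.measurableSet
  calc volume K + volume K' = volume U + volume V := by rw [hvolU, hvolV]
    _ = volume (U ∪ V) + volume (U ∩ V) := this.symm
    _ = volume (U ∪ V) := by rw [hIV, add_zero]
    _ ≤ volume (K + K') := measure_mono (union_subset hUsub hVsub)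

private lemma layercake_le_one {φ : ℝ → ℝ≥0∞} (hφ : Measurable φ) (hb : ∀ a, φ a ≤ 1) :
    ∫⁻ a, φ a = ∫⁻ t in Ioi (0:ℝ), volume {a | ENNReal.ofReal t < φ a} := by
  have hne : ∀ a, φ a ≠ ⊤ := fun a => ((hb a).trans_lt ENNReal.one_lt_top).ne
  have h := lintegral_eq_lintegral_meas_lt volume
      (f := fun a => (φ a).toReal) (ae_of_all _ fun a => ENNReal.toReal_nonneg)
      (ENNReal.measurable_toReal.comp hφ).aemeasurable
  have h1 : ∫⁻ a, ENNReal.ofReal ((φ a).toReal) = ∫⁻ a, φ a :=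
    lintegral_congr fun a => ENNReal.ofReal_toReal (hne a)
  rw [h1] at h
  rw [h]
  refine setLIntegral_congr_fun measurableSet_Ioi (fun t ht => ?_)
  congr 1
  ext a
  simp only [mem_setOf_eq]
  exact ((ENNReal.ofReal_lt_iff_lt_toReal (le_of_lt ht) (hne a))).symm

private lemma vol_eq_iSup_compact {s : Set ℝ} (hs : MeasurableSet s) :
    volume s = ⨆ K : {K : Set ℝ // K ⊆ s ∧ IsCompact K}, volume K.1 := by
  rw [hs.measure_eq_iSup_isCompact]
  apply le_antisymm
  · refine iSup₂_le fun K hK => iSup_le fun hKc => ?_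
    exact le_iSup (fun K : {K : Set ℝ // K ⊆ s ∧ IsCompact K} => volume K.1) ⟨K, hK, hKc⟩
  · refine iSup_le fun K => ?_
    exact le_iSup₂_of_le K.1 K.2.1 (le_iSup_of_le K.2.2 le_rfl)

private lemma truncate_layercake {F : ℝ → ℝ≥0∞} (hF1 : ∀ a, F a ≤ 1) :
    ∫⁻ t in Ioi (0:ℝ), volume {a | ENNReal.ofReal t < F a}
      = ∫⁻ t in Ioo (0:ℝ) 1, volume {a | ENNReal.ofReal t < F a} := by
  have hun : Ioi (0:ℝ) = Ioo 0 1 ∪ Ici 1 := by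
    ext u
    simp only [mem_Ioi, mem_union, mem_Ioo, mem_Ici]
    constructor
    · intro h
      by_cases h1 : u < 1
      · exact Or.inl ⟨h, h1⟩
      · exact Or.inr (le_of_not_gt h1)
    · rintro (⟨h, _⟩ | h)
      · exact h
      · linarith
  have hdisj : Disjoint (Ioo (0:ℝ) 1) (Ici 1) :=
    Set.disjoint_left.mpr fun u hu h2 => absurd (mem_Ici.mp h2) (not_le.mpr hu.2)
  rw [hun, lintegral_union measurableSet_Ici hdisj]
  have hzero : ∫⁻ t in Ici (1:ℝ), volume {a | ENNReal.ofReal t < F a} = 0 := by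
    rw [setLIntegral_congr_fun measurableSet_Ici (fun t ht => ?_), lintegral_zero]
    have hempty : {a | ENNReal.ofReal t < F a} = ∅ :=
      eq_empty_of_forall_notMem fun a ha =>
        absurd ha (not_lt.mpr ((hF1 a).trans (ENNReal.one_le_ofReal.mpr ht)))
    rw [hempty]; exact measure_empty
  rw [hzero, add_zero]

private lemma antitone_vol_level {F : ℝ → ℝ≥0∞} :
    Antitone fun t : ℝ => volume {a | ENNReal.ofReal t < F a} := by
  intro t t' h
  exact measure_mono fun a ha => lt_of_le_of_lt (ENNReal.ofReal_le_ofReal h) ha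

private lemma pl_norm {F G H : ℝ → ℝ≥0∞} (mF : Measurable F) (mG : Measurable G)
    (mH : Measurable H)
    (hF1 : ∀ a, F a ≤ 1) (hG1 : ∀ a, G a ≤ 1)
    (hFsup : (⨆ a, F a) = 1) (hGsup : (⨆ a, G a) = 1)
    (hcond : ∀ a b, (F a * G b) ^ (1/2:ℝ) ≤ H ((a + b)/2)) :
    (∫⁻ a, F a) + (∫⁻ a, G a) ≤ 2 * ∫⁻ a, H a := by
  have key : ∀ t : ℝ, 0 < t → t < 1 →
      volume {a | ENNReal.ofReal t < F a} + volume {b | ENNReal.ofReal t < G b}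
        ≤ 2 * volume {x | ENNReal.ofReal t < H x} := by
    intro t ht0 ht1
    set c := ENNReal.ofReal t with hcdef
    have hc0 : c ≠ 0 := (ENNReal.ofReal_pos.mpr ht0).ne'
    have hctop : c ≠ ⊤ := ENNReal.ofReal_ne_top
    have hclt1 : c < 1 := ENNReal.ofReal_lt_one.mpr ht1
    obtain ⟨a₀, ha₀⟩ : ∃ a, c < F a := lt_iSup_iff.mp (hFsup ▸ hclt1)
    obtain ⟨b₀, hb₀⟩ : ∃ b, c < G b := lt_iSup_iff.mp (hGsup ▸ hclt1)
    have hSF : MeasurableSet {a | c < F a} := measurableSet_lt measurable_const mF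
    have hSG : MeasurableSet {b | c < G b} := measurableSet_lt measurable_const mG
    rw [vol_eq_iSup_compact hSF, vol_eq_iSup_compact hSG]
    haveI : Nonempty {K : Set ℝ // K ⊆ {a | c < F a} ∧ IsCompact K} :=
      ⟨⟨∅, empty_subset _, isCompact_empty⟩⟩
    haveI : Nonempty {K : Set ℝ // K ⊆ {b | c < G b} ∧ IsCompact K} :=
      ⟨⟨∅, empty_subset _, isCompact_empty⟩⟩
    refine ENNReal.iSup_add_iSup_le ?_
    rintro ⟨K, hKs, hKc⟩ ⟨K', hK's, hK'c⟩
    set K₀ : Set ℝ := insert a₀ K with hK₀def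
    set K₀' : Set ℝ := insert b₀ K' with hK₀'def
    have hK₀c : IsCompact K₀ := hKc.insert a₀
    have hK₀'c : IsCompact K₀' := hK'c.insert b₀
    have hK₀s : K₀ ⊆ {a | c < F a} := insert_subset ha₀ hKs
    have hK₀'s : K₀' ⊆ {b | c < G b} := insert_subset hb₀ hK's
    set Mid := (fun p : ℝ × ℝ => (p.1 + p.2)/2) '' (K₀ ×ˢ K₀') with hMiddef
    have hMidc : IsCompact Mid :=
      (hK₀c.prod hK₀'c).image ((continuous_fst.add continuous_snd).div_const 2)
    have hcc : (c * c) ^ (1/2:ℝ) = c := by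
      rw [ENNReal.mul_rpow_of_nonneg _ _ (by norm_num : (0:ℝ) ≤ 1/2),
        ← ENNReal.rpow_add _ _ hc0 hctop]
      norm_num
    have hMidsub : Mid ⊆ {x | c < H x} := by
      rintro z ⟨⟨x, y⟩, hxy, rfl⟩
      obtain ⟨hx, hy⟩ := mem_prod.mp hxy
      have hFx : c < F x := hK₀s hx
      have hGy : c ≤ G y := (hK₀'s hy).le
      have hlt : c * c < F x * G y :=
        lt_of_lt_of_le (ENNReal.mul_lt_mul_left hc0 hctop hFx) (mul_le_mul_right hGy _)
      calc c = (c * c) ^ (1/2:ℝ) := hcc.symm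
        _ < (F x * G y) ^ (1/2:ℝ) := ENNReal.rpow_lt_rpow hlt (by norm_num)
        _ ≤ H ((x + y)/2) := hcond x y
    have hMidEq : Mid = (1/2 : ℝ) • (K₀ + K₀') := by
      ext z
      constructor
      · rintro ⟨⟨x, y⟩, hxy, rfl⟩
        obtain ⟨hx, hy⟩ := mem_prod.mp hxy
        exact ⟨x + y, add_mem_add hx hy, by dsimp; ring⟩
      · rintro ⟨w, hw, rfl⟩
        obtain ⟨x, hx, y, hy, rfl⟩ := mem_add.mp hw
        exact ⟨(x, y), mem_prod.mpr ⟨hx, hy⟩, by dsimp; ring⟩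
    have hvolMid : 2 * volume Mid = volume (K₀ + K₀') := by
      rw [hMidEq, Measure.addHaar_smul]
      have : ENNReal.ofReal |(1/2:ℝ) ^ Module.finrank ℝ ℝ| = 2⁻¹ := by
        rw [Module.finrank_self, pow_one, abs_of_pos (by norm_num : (0:ℝ) < 1/2), one_div,
          ENNReal.ofReal_inv_of_pos (by norm_num : (0:ℝ) < 2)]
        norm_num
      rw [this, ← mul_assoc, ENNReal.mul_inv_cancel two_ne_zero ENNReal.ofNat_ne_top, one_mul]
    calc volume K + volume K'
        ≤ volume K₀ + volume K₀' :=
          add_le_add (measure_mono (subset_insert _ _)) (measure_mono (subset_insert _ _))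
      _ ≤ volume (K₀ + K₀') :=
          sumset_one_dim hK₀c hK₀'c (insert_nonempty _ _) (insert_nonempty _ _)
      _ = 2 * volume Mid := hvolMid.symm
      _ ≤ 2 * volume {x | c < H x} := mul_le_mul_right (measure_mono hMidsub) _
  -- assemble
  set H₁ : ℝ → ℝ≥0∞ := fun x => min (H x) 1 with hH₁def
  have mH₁ : Measurable H₁ := mH.min measurable_const
  have hH₁1 : ∀ x, H₁ x ≤ 1 := fun x => min_le_right _ _
  have hH₁H : ∫⁻ x, H₁ x ≤ ∫⁻ x, H x := lintegral_mono fun x => min_le_left _ _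
  have mφF : Measurable fun t : ℝ => volume {a | ENNReal.ofReal t < F a} :=
    antitone_vol_level.measurable
  have mφG : Measurable fun t : ℝ => volume {b | ENNReal.ofReal t < G b} :=
    antitone_vol_level.measurable
  have mφH₁ : Measurable fun t : ℝ => volume {x | ENNReal.ofReal t < H₁ x} :=
    antitone_vol_level.measurable
  rw [layercake_le_one mF hF1, layercake_le_one mG hG1, truncate_layercake hF1,
    truncate_layercake hG1]
  have step : (∫⁻ t in Ioo (0:ℝ) 1, volume {a | ENNReal.ofReal t < F a})
      + (∫⁻ t in Ioo (0:ℝ) 1, volume {b | ENNReal.ofReal t < G b})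
      ≤ 2 * ∫⁻ t in Ioo (0:ℝ) 1, volume {x | ENNReal.ofReal t < H₁ x} := by
    rw [← lintegral_add_left mφF, ← lintegral_const_mul 2 mφH₁]
    refine setLIntegral_mono (mφH₁.const_mul 2) fun t ht => ?_
    have heq : {x | ENNReal.ofReal t < H₁ x} = {x | ENNReal.ofReal t < H x} := by
      ext x
      simp only [hH₁def, mem_setOf_eq, lt_min_iff]
      exact ⟨fun h => h.1, fun h => ⟨h, ENNReal.ofReal_lt_one.mpr ht.2⟩⟩
    rw [heq]
    exact key t ht.1 ht.2
  refine step.trans (mul_le_mul_right ?_ 2)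
  calc ∫⁻ t in Ioo (0:ℝ) 1, volume {x | ENNReal.ofReal t < H₁ x}
      ≤ ∫⁻ t in Ioi (0:ℝ), volume {x | ENNReal.ofReal t < H₁ x} :=
        lintegral_mono' (Measure.restrict_mono Ioo_subset_Ioi_self le_rfl) le_rfl
    _ = ∫⁻ x, H₁ x := (layercake_le_one mH₁ hH₁1).symm
    _ ≤ ∫⁻ x, H x := hH₁H

private lemma pl_dim_one {F G H : ℝ → ℝ≥0∞} (mF : Measurable F) (mG : Measurable G)
    (mH : Measurable H) {CF CG : ℝ≥0∞} (hCF : CF ≠ ⊤) (hCG : CG ≠ ⊤)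
    (hFC : ∀ a, F a ≤ CF) (hGC : ∀ a, G a ≤ CG)
    (hcond : ∀ a b, (F a * G b) ^ (1/2:ℝ) ≤ H ((a + b)/2)) :
    (∫⁻ a, F a) ^ (1/2:ℝ) * (∫⁻ a, G a) ^ (1/2:ℝ) ≤ ∫⁻ a, H a := by
  set MF := ⨆ a, F a with hMFdef
  set MG := ⨆ a, G a with hMGdef
  by_cases hMF : MF = 0
  · have : ∀ a, F a = 0 := fun a => le_antisymm (hMF ▸ le_iSup F a) zero_le
    have hint : ∫⁻ a, F a = 0 := by
      rw [lintegral_congr this, lintegral_zero]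
    rw [hint, ENNReal.zero_rpow_of_pos (by norm_num), zero_mul]
    exact zero_le
  by_cases hMG : MG = 0
  · have : ∀ a, G a = 0 := fun a => le_antisymm (hMG ▸ le_iSup G a) zero_le
    have hint : ∫⁻ a, G a = 0 := by
      rw [lintegral_congr this, lintegral_zero]
    rw [hint, ENNReal.zero_rpow_of_pos (by norm_num), mul_zero]
    exact zero_le
  have hMFtop : MF ≠ ⊤ := ((iSup_le hFC).trans_lt hCF.lt_top).ne
  have hMGtop : MG ≠ ⊤ := ((iSup_le hGC).trans_lt hCG.lt_top).ne
  set c : ℝ≥0∞ := MF ^ (1/2:ℝ) * MG ^ (1/2:ℝ) with hcdef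
  have hrF0 : MF ^ (1/2:ℝ) ≠ 0 := (ENNReal.rpow_pos (pos_iff_ne_zero.mpr hMF) hMFtop).ne'
  have hrG0 : MG ^ (1/2:ℝ) ≠ 0 := (ENNReal.rpow_pos (pos_iff_ne_zero.mpr hMG) hMGtop).ne'
  have hrFtop : MF ^ (1/2:ℝ) ≠ ⊤ := ENNReal.rpow_ne_top_of_nonneg (by norm_num) hMFtop
  have hrGtop : MG ^ (1/2:ℝ) ≠ ⊤ := ENNReal.rpow_ne_top_of_nonneg (by norm_num) hMGtop
  have hc0 : c ≠ 0 := mul_ne_zero hrF0 hrG0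
  have hctop : c ≠ ⊤ := ENNReal.mul_ne_top hrFtop hrGtop
  set Ft : ℝ → ℝ≥0∞ := fun a => F a * MF⁻¹ with hFtdef
  set Gt : ℝ → ℝ≥0∞ := fun b => G b * MG⁻¹ with hGtdef
  set Ht : ℝ → ℝ≥0∞ := fun x => H x * c⁻¹ with hHtdef
  have hMFinv : MF * MF⁻¹ = 1 := ENNReal.mul_inv_cancel hMF hMFtop
  have hMGinv : MG * MG⁻¹ = 1 := ENNReal.mul_inv_cancel hMG hMGtop
  have hFt1 : ∀ a, Ft a ≤ 1 := fun a => by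
    rw [← hMFinv]; exact mul_le_mul_left (le_iSup F a) _
  have hGt1 : ∀ b, Gt b ≤ 1 := fun b => by
    rw [← hMGinv]; exact mul_le_mul_left (le_iSup G b) _
  have hFtsup : (⨆ a, Ft a) = 1 := by
    rw [hFtdef]
    rw [← ENNReal.iSup_mul]
    exact hMFinv
  have hGtsup : (⨆ b, Gt b) = 1 := by
    rw [hGtdef, ← ENNReal.iSup_mul]
    exact hMGinv
  have hinvc : (MF⁻¹ * MG⁻¹) ^ (1/2:ℝ) = c⁻¹ := by
    rw [ENNReal.mul_rpow_of_nonneg _ _ (by norm_num : (0:ℝ) ≤ 1/2),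
      ENNReal.inv_rpow, ENNReal.inv_rpow, hcdef,
      ENNReal.mul_inv (Or.inl hrF0) (Or.inl hrFtop)]
  have hcondt : ∀ a b, (Ft a * Gt b) ^ (1/2:ℝ) ≤ Ht ((a + b)/2) := by
    intro a b
    have : Ft a * Gt b = (F a * G b) * (MF⁻¹ * MG⁻¹) := by
      rw [hFtdef, hGtdef]; ring
    rw [this, ENNReal.mul_rpow_of_nonneg _ _ (by norm_num : (0:ℝ) ≤ 1/2), hinvc, hHtdef]
    exact mul_le_mul_left (hcond a b) _
  have hmain := pl_norm (mF.mul_const _) (mG.mul_const _) (mH.mul_const _)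
    hFt1 hGt1 hFtsup hGtsup hcondt
  have h2 : ((∫⁻ a, Ft a) + ∫⁻ b, Gt b) / 2 ≤ ∫⁻ x, Ht x := by
    rw [ENNReal.div_le_iff_le_mul (Or.inl two_ne_zero) (Or.inl ENNReal.ofNat_ne_top)]
    exact hmain.trans (le_of_eq (mul_comm _ _))
  have hamgm : ((∫⁻ a, Ft a) * ∫⁻ b, Gt b) ^ (1/2:ℝ) ≤ ∫⁻ x, Ht x :=
    (ennreal_amgm _ _).trans h2
  have hFint : ∫⁻ a, Ft a = (∫⁻ a, F a) * MF⁻¹ := lintegral_mul_const _ mF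
  have hGint : ∫⁻ b, Gt b = (∫⁻ b, G b) * MG⁻¹ := lintegral_mul_const _ mG
  have hHint : ∫⁻ x, Ht x = (∫⁻ x, H x) * c⁻¹ := lintegral_mul_const _ mH
  rw [hFint, hGint, hHint] at hamgm
  have hexp : ((∫⁻ a, F a) * MF⁻¹ * ((∫⁻ b, G b) * MG⁻¹)) ^ (1/2:ℝ)
      = ((∫⁻ a, F a) * ∫⁻ b, G b) ^ (1/2:ℝ) * c⁻¹ := by
    have : (∫⁻ a, F a) * MF⁻¹ * ((∫⁻ b, G b) * MG⁻¹)
        = ((∫⁻ a, F a) * ∫⁻ b, G b) * (MF⁻¹ * MG⁻¹) := by ring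
    rw [this, ENNReal.mul_rpow_of_nonneg _ _ (by norm_num : (0:ℝ) ≤ 1/2), hinvc]
  rw [hexp] at hamgm
  have := mul_le_mul_left hamgm c
  rw [mul_assoc, ENNReal.inv_mul_cancel hc0 hctop, mul_one, mul_assoc,
    ENNReal.inv_mul_cancel hc0 hctop, mul_one] at this
  calc (∫⁻ a, F a) ^ (1/2:ℝ) * (∫⁻ a, G a) ^ (1/2:ℝ)
      = ((∫⁻ a, F a) * ∫⁻ a, G a) ^ (1/2:ℝ) :=
        (ENNReal.mul_rpow_of_nonneg _ _ (by norm_num : (0:ℝ) ≤ 1/2)).symm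
    _ ≤ ∫⁻ x, H x := this

private lemma insertNth_mid {k : ℕ} (a b : ℝ) (x' y' : Fin k → ℝ) :
    Fin.insertNth (α := fun _ : Fin (k+1) => ℝ) 0 ((a + b)/2) (fun j => (x' j + y' j)/2)
      = fun j => (Fin.insertNth (α := fun _ : Fin (k+1) => ℝ) 0 a x' j
          + Fin.insertNth (α := fun _ : Fin (k+1) => ℝ) 0 b y' j)/2 := by
  funext j
  refine Fin.cases ?_ ?_ j
  · rw [Fin.insertNth_apply_same (α := fun _ : Fin (k+1) => ℝ),
      Fin.insertNth_apply_same (α := fun _ : Fin (k+1) => ℝ),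
      Fin.insertNth_apply_same (α := fun _ : Fin (k+1) => ℝ)]
  · intro j'
    have hs : (j' : Fin k).succ = (0 : Fin (k+1)).succAbove j' :=
      (congrFun Fin.succAbove_zero j').symm
    rw [hs, Fin.insertNth_apply_succAbove (α := fun _ : Fin (k+1) => ℝ),
      Fin.insertNth_apply_succAbove (α := fun _ : Fin (k+1) => ℝ),
      Fin.insertNth_apply_succAbove (α := fun _ : Fin (k+1) => ℝ)]

private lemma pl_fin (k : ℕ) :
    ∀ (f g h : (Fin k → ℝ) → ℝ≥0∞), Measurable f → Measurable g → Measurable h →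
    ∀ (Cf Cg : ℝ≥0∞), Cf ≠ ⊤ → Cg ≠ ⊤ →
    (∀ x, f x ≤ Cf) → (∀ x, g x ≤ Cg) →
    ∀ (Rf Rg : ℝ), (∀ x, f x ≠ 0 → ∀ j, |x j| ≤ Rf) → (∀ x, g x ≠ 0 → ∀ j, |x j| ≤ Rg) →
    (∀ x y, (f x * g y) ^ (1/2:ℝ) ≤ h (fun j => (x j + y j)/2)) →
    (∫⁻ x, f x) ^ (1/2:ℝ) * (∫⁻ x, g x) ^ (1/2:ℝ) ≤ ∫⁻ x, h x := by
  induction k with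
  | zero =>
    intro f g h mf mg mh Cf Cg hCf hCg hfC hgC Rf Rg hfR hgR hcond
    have hvol : (volume : Measure (Fin 0 → ℝ)) = Measure.dirac 0 :=
      Measure.volume_pi_eq_dirac 0
    simp only [hvol, lintegral_dirac]
    have h00 := hcond 0 0
    have heq : (fun j : Fin 0 => ((0 : Fin 0 → ℝ) j + (0 : Fin 0 → ℝ) j)/2) = 0 :=
      funext fun j => j.elim0
    rw [heq] at h00
    calc (f 0) ^ (1/2:ℝ) * (g 0) ^ (1/2:ℝ)
        = (f 0 * g 0) ^ (1/2:ℝ) := (ENNReal.mul_rpow_of_nonneg _ _ (by norm_num)).symm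
      _ ≤ h 0 := h00
  | succ k ih =>
    intro f g h mf mg mh Cf Cg hCf hCg hfC hgC Rf Rg hfR hgR hcond
    set e := MeasurableEquiv.piFinSuccAbove (fun _ : Fin (k+1) => ℝ) 0 with hedef
    have hmp : MeasurePreserving (⇑e) volume volume :=
      volume_preserving_piFinSuccAbove (fun _ : Fin (k+1) => ℝ) 0
    have hmps : MeasurePreserving (⇑e.symm) volume volume := hmp.symm e
    set F : ℝ → ℝ≥0∞ := fun a => ∫⁻ x', f (e.symm (a, x')) with hFdef
    set G : ℝ → ℝ≥0∞ := fun b => ∫⁻ y', g (e.symm (b, y')) with hGdef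
    set H : ℝ → ℝ≥0∞ := fun cm => ∫⁻ z', h (e.symm (cm, z')) with hHdef
    have mfs : Measurable fun p : ℝ × (Fin k → ℝ) => f (e.symm p) :=
      mf.comp e.symm.measurable
    have mgs : Measurable fun p : ℝ × (Fin k → ℝ) => g (e.symm p) :=
      mg.comp e.symm.measurable
    have mhs : Measurable fun p : ℝ × (Fin k → ℝ) => h (e.symm p) :=
      mh.comp e.symm.measurable
    have mF : Measurable F := mfs.lintegral_prod_right'
    have mG : Measurable G := mgs.lintegral_prod_right'
    have mH : Measurable H := mhs.lintegral_prod_right'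
    have intsplit : ∀ (φ : (Fin (k+1) → ℝ) → ℝ≥0∞), Measurable φ →
        ∫⁻ x, φ x = ∫⁻ a, ∫⁻ x', φ (e.symm (a, x')) := by
      intro φ mφ
      have h1 : ∫⁻ p : ℝ × (Fin k → ℝ), φ (e.symm p) = ∫⁻ x, φ x :=
        hmps.lintegral_comp mφ
      have h2 : ∫⁻ p : ℝ × (Fin k → ℝ), φ (e.symm p)
          = ∫⁻ a, ∫⁻ x', φ (e.symm (a, x')) := by
        rw [Measure.volume_eq_prod, lintegral_prod (fun p => φ (e.symm p)) ((mφ.comp e.symm.measurable).aemeasurable)]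
      rw [← h1, h2]
    -- box bound
    set box : Set (Fin k → ℝ) := Set.univ.pi fun _ : Fin k => Icc (-Rf) Rf with hboxdef
    set box' : Set (Fin k → ℝ) := Set.univ.pi fun _ : Fin k => Icc (-Rg) Rg with hbox'def
    have hboxm : MeasurableSet box := MeasurableSet.univ_pi fun _ => measurableSet_Icc
    have hbox'm : MeasurableSet box' := MeasurableSet.univ_pi fun _ => measurableSet_Icc
    have hboxvol : volume box ≠ ⊤ := by
      rw [hboxdef, volume_pi_pi]
      exact (ENNReal.prod_lt_top fun j _ => by
        rw [Real.volume_Icc]; exact ENNReal.ofReal_lt_top).ne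
    have hbox'vol : volume box' ≠ ⊤ := by
      rw [hbox'def, volume_pi_pi]
      exact (ENNReal.prod_lt_top fun j _ => by
        rw [Real.volume_Icc]; exact ENNReal.ofReal_lt_top).ne
    have hFC : ∀ a, F a ≤ Cf * volume box := by
      intro a
      have hb : ∀ x', f (e.symm (a, x')) ≤ box.indicator (fun _ => Cf) x' := by
        intro x'
        by_cases hx : x' ∈ box
        · rw [indicator_of_mem hx]; exact hfC _
        · rw [indicator_of_notMem hx]
          rcases eq_or_ne (f (e.symm (a, x'))) 0 with h0 | h0
          · exact le_of_eq h0
          · exfalso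
            apply hx
            intro j _
            have := hfR _ h0 ((0 : Fin (k+1)).succAbove j)
            rw [show (e.symm (a, x')) ((0 : Fin (k+1)).succAbove j) = x' j from
              Fin.insertNth_apply_succAbove (α := fun _ : Fin (k+1) => ℝ) 0 a x' j] at this
            exact mem_Icc.mpr (abs_le.mp this)
      calc F a ≤ ∫⁻ x', box.indicator (fun _ => Cf) x' := lintegral_mono hb
        _ = Cf * volume box := by
            rw [lintegral_indicator_const hboxm]
    have hGC : ∀ b, G b ≤ Cg * volume box' := by
      intro b
      have hb : ∀ y', g (e.symm (b, y')) ≤ box'.indicator (fun _ => Cg) y' := by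
        intro y'
        by_cases hy : y' ∈ box'
        · rw [indicator_of_mem hy]; exact hgC _
        · rw [indicator_of_notMem hy]
          rcases eq_or_ne (g (e.symm (b, y'))) 0 with h0 | h0
          · exact le_of_eq h0
          · exfalso
            apply hy
            intro j _
            have := hgR _ h0 ((0 : Fin (k+1)).succAbove j)
            rw [show (e.symm (b, y')) ((0 : Fin (k+1)).succAbove j) = y' j from
              Fin.insertNth_apply_succAbove (α := fun _ : Fin (k+1) => ℝ) 0 b y' j] at this
            exact mem_Icc.mpr (abs_le.mp this)
      calc G b ≤ ∫⁻ y', box'.indicator (fun _ => Cg) y' := lintegral_mono hb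
        _ = Cg * volume box' := by
            rw [lintegral_indicator_const hbox'm]
    have hCftop : Cf * volume box ≠ ⊤ := ENNReal.mul_ne_top hCf hboxvol
    have hCgtop : Cg * volume box' ≠ ⊤ := ENNReal.mul_ne_top hCg hbox'vol
    have hcond1 : ∀ a b : ℝ, (F a * G b) ^ (1/2:ℝ) ≤ H ((a + b)/2) := by
      intro a b
      have key := ih (fun x' => f (e.symm (a, x'))) (fun y' => g (e.symm (b, y')))
        (fun z' => h (e.symm ((a + b)/2, z')))
        (mf.comp (e.symm.measurable.comp measurable_prodMk_left))
        (mg.comp (e.symm.measurable.comp measurable_prodMk_left))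
        (mh.comp (e.symm.measurable.comp measurable_prodMk_left))
        Cf Cg hCf hCg (fun x' => hfC _) (fun y' => hgC _) Rf Rg
        (fun x' h0 j => by
          have := hfR _ h0 ((0 : Fin (k+1)).succAbove j)
          rwa [show (e.symm (a, x')) ((0 : Fin (k+1)).succAbove j) = x' j from
            Fin.insertNth_apply_succAbove (α := fun _ : Fin (k+1) => ℝ) 0 a x' j] at this)
        (fun y' h0 j => by
          have := hgR _ h0 ((0 : Fin (k+1)).succAbove j)
          rwa [show (e.symm (b, y')) ((0 : Fin (k+1)).succAbove j) = y' j from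
            Fin.insertNth_apply_succAbove (α := fun _ : Fin (k+1) => ℝ) 0 b y' j] at this)
        (fun x' y' => by
          have hmid : (e.symm ((a + b)/2, fun j => (x' j + y' j)/2) : Fin (k+1) → ℝ)
              = fun j => (e.symm (a, x') j + e.symm (b, y') j)/2 := insertNth_mid a b x' y'
          rw [show h (e.symm ((a + b)/2, fun j => (x' j + y' j)/2))
            = h (fun j => (e.symm (a, x') j + e.symm (b, y') j)/2) from congrArg h hmid]
          exact hcond _ _)
      rw [ENNReal.mul_rpow_of_nonneg _ _ (by norm_num : (0:ℝ) ≤ 1/2)]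
      exact key
    have main := pl_dim_one mF mG mH hCftop hCgtop hFC hGC hcond1
    rw [intsplit f mf, intsplit g mg, intsplit h mh]
    exact main

private lemma mid_vol_fin {k : ℕ} {K K' S : Set (Fin k → ℝ)} (hK : IsCompact K)
    (hK' : IsCompact K') (hS : MeasurableSet S)
    (hmid : ∀ x ∈ K, ∀ y ∈ K', (fun j => (x j + y j)/2) ∈ S) :
    (volume K) ^ (1/2:ℝ) * (volume K') ^ (1/2:ℝ) ≤ volume S := by
  obtain ⟨Rf, hRf⟩ := hK.isBounded.subset_closedBall 0
  obtain ⟨Rg, hRg⟩ := hK'.isBounded.subset_closedBall 0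
  have hsupf : ∀ x : Fin k → ℝ, K.indicator (1 : (Fin k → ℝ) → ℝ≥0∞) x ≠ 0 → ∀ j, |x j| ≤ Rf := by
    intro x h0 j
    have hxK : x ∈ K := by
      by_contra hx
      exact h0 (indicator_of_notMem hx _)
    have h1 : ‖x‖ ≤ Rf := by
      have := hRf hxK
      rwa [Metric.mem_closedBall, dist_zero_right] at this
    calc |x j| = ‖x j‖ := (Real.norm_eq_abs _).symm
      _ ≤ ‖x‖ := norm_le_pi_norm x j
      _ ≤ Rf := h1
  have hsupg : ∀ y : Fin k → ℝ, K'.indicator (1 : (Fin k → ℝ) → ℝ≥0∞) y ≠ 0 → ∀ j, |y j| ≤ Rg := by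
    intro y h0 j
    have hyK : y ∈ K' := by
      by_contra hy
      exact h0 (indicator_of_notMem hy _)
    have h1 : ‖y‖ ≤ Rg := by
      have := hRg hyK
      rwa [Metric.mem_closedBall, dist_zero_right] at this
    calc |y j| = ‖y j‖ := (Real.norm_eq_abs _).symm
      _ ≤ ‖y‖ := norm_le_pi_norm y j
      _ ≤ Rg := h1
  have hcond : ∀ x y : Fin k → ℝ,
      (K.indicator 1 x * K'.indicator 1 y) ^ (1/2:ℝ)
        ≤ S.indicator (1 : (Fin k → ℝ) → ℝ≥0∞) (fun j => (x j + y j)/2) := by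
    intro x y
    by_cases hx : x ∈ K
    · by_cases hy : y ∈ K'
      · rw [indicator_of_mem hx, indicator_of_mem hy, indicator_of_mem (hmid x hx y hy)]
        simp
      · rw [indicator_of_notMem hy, mul_zero,
          ENNReal.zero_rpow_of_pos (by norm_num : (0:ℝ) < 1/2)]
        exact zero_le
    · rw [indicator_of_notMem hx, zero_mul,
        ENNReal.zero_rpow_of_pos (by norm_num : (0:ℝ) < 1/2)]
      exact zero_le
  have := pl_fin k (K.indicator 1) (K'.indicator 1) (S.indicator 1)
    (measurable_const.indicator hK.measurableSet)
    (measurable_const.indicator hK'.measurableSet)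
    (measurable_const.indicator hS)
    1 1 ENNReal.one_ne_top ENNReal.one_ne_top
    (fun x => Set.indicator_le_self K 1 x)
    (fun y => Set.indicator_le_self K' 1 y)
    Rf Rg hsupf hsupg hcond
  rwa [lintegral_indicator_one hK.measurableSet, lintegral_indicator_one hK'.measurableSet,
    lintegral_indicator_one hS] at this

private lemma vol_eq_iSup_compact' {α : Type*} [MeasurableSpace α] [TopologicalSpace α]
    (μ : Measure α) [μ.InnerRegular] {s : Set α} (hs : MeasurableSet s) :
    μ s = ⨆ K : {K : Set α // K ⊆ s ∧ IsCompact K}, μ K.1 := by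
  rw [hs.measure_eq_iSup_isCompact]
  apply le_antisymm
  · refine iSup₂_le fun K hK => iSup_le fun hKc => ?_
    exact le_iSup (fun K : {K : Set α // K ⊆ s ∧ IsCompact K} => μ K.1) ⟨K, hK, hKc⟩
  · refine iSup_le fun K => ?_
    exact le_iSup₂_of_le K.1 K.2.1 (le_iSup_of_le K.2.2 le_rfl)

private lemma vol_slice {κ : Type*} [Fintype κ] {A S : Set (κ → ℝ)}
    (hA : MeasurableSet A) (hS : MeasurableSet S)
    (h : ∀ t ∈ A, ∀ s ∈ A, (fun j => (t j - s j)/2) ∈ S) :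
    volume A ≤ volume S := by
  classical
  set eκ := Fintype.equivFin κ with heκ
  set Φ := MeasurableEquiv.arrowCongr' eκ (MeasurableEquiv.refl ℝ) with hΦdef
  have hΦ : MeasurePreserving (⇑Φ) volume volume :=
    volume_preserving_arrowCongr' eκ (MeasurableEquiv.refl ℝ) (MeasurePreserving.id _)
  set A' := ⇑Φ.symm ⁻¹' A with hA'def
  set S' := ⇑Φ.symm ⁻¹' S with hS'def
  have hA'm : MeasurableSet A' := Φ.symm.measurable hA
  have hS'm : MeasurableSet S' := Φ.symm.measurable hS
  have hvolA : volume A' = volume A :=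
    (hΦ.symm Φ).measure_preimage hA.nullMeasurableSet
  have hvolS : volume S' = volume S :=
    (hΦ.symm Φ).measure_preimage hS.nullMeasurableSet
  have hcond : ∀ t ∈ A', ∀ s ∈ A', (fun j => (t j - s j)/2) ∈ S' := by
    intro t ht s hs
    have := h _ ht _ hs
    have heq : (⇑Φ.symm (fun j => (t j - s j)/2) : κ → ℝ)
        = fun i => (⇑Φ.symm t i - ⇑Φ.symm s i)/2 := rfl
    show ⇑Φ.symm (fun j => (t j - s j)/2) ∈ S
    rw [heq]
    exact this
  rw [← hvolA, ← hvolS]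
  rw [vol_eq_iSup_compact' volume hA'm]
  refine iSup_le fun C => ?_
  obtain ⟨C, hCsub, hCc⟩ := C
  dsimp only
  rcases eq_or_ne (volume C) 0 with h0 | h0
  · rw [h0]; exact zero_le
  have hCneg : IsCompact (-C) := hCc.neg
  have hmid : ∀ x ∈ C, ∀ y ∈ (-C), (fun j => (x j + y j)/2) ∈ S' := by
    intro x hx y hy
    have hyA : -y ∈ A' := hCsub hy
    have := hcond x (hCsub hx) (-y) hyA
    have heq : (fun j => (x j + y j)/2) = fun j => (x j - (-y) j)/2 := by
      funext j
      show (x j + y j)/2 = (x j - (-y) j)/2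
      rw [Pi.neg_apply]
      ring
    rw [heq]
    exact this
  have hbm := mid_vol_fin hCc hCneg hS'm hmid
  rw [Measure.measure_neg] at hbm
  have hCtop : volume C ≠ ⊤ := hCc.measure_lt_top.ne
  calc volume C = volume C ^ (1/2:ℝ) * volume C ^ (1/2:ℝ) := by
        rw [← ENNReal.rpow_add _ _ h0 hCtop]; norm_num
    _ ≤ volume S' := hbm

private lemma prod_slice {α : Type*} [MeasureSpace α] [SigmaFinite (volume : Measure α)]
    {κ : Type*} [Fintype κ] {K S : Set (α × (κ → ℝ))}
    (hK : MeasurableSet K) (hS : MeasurableSet S)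
    (h : ∀ (w : α) (t s : κ → ℝ), (w, t) ∈ K → (w, s) ∈ K →
      (w, fun j => (t j - s j)/2) ∈ S) :
    volume K ≤ volume S := by
  rw [Measure.volume_eq_prod, Measure.prod_apply hK, Measure.prod_apply hS]
  refine lintegral_mono fun w => ?_
  refine vol_slice (measurable_prodMk_left hK) (measurable_prodMk_left hS) ?_
  intro t ht s hs
  exact h w t s ht hs


/-! ### Auxiliary machinery for the Steiner symmetrization volume bound -/

private def zdx {n : ℕ} (hn : 0 < n) : Fin n := ⟨0, hn⟩

private abbrev Idx (n m : ℕ) : Type := (_ : Fin m) × Fin n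

private def ppred {n m : ℕ} (hn : 0 < n) : Idx n m → Prop := fun q => q.2 ≠ zdx hn

private instance {n m : ℕ} (hn : 0 < n) : DecidablePred (ppred (n := n) (m := m) hn) :=
  fun _ => instDecidableNot

private def eTx {n m : ℕ} (hn : 0 < n) : {q : Idx n m // ¬ ppred hn q} ≃ Fin m where
  toFun q := q.1.1
  invFun i := ⟨⟨i, zdx hn⟩, by simp [ppred]⟩
  left_inv := by rintro ⟨⟨i, j⟩, hj⟩; obtain rfl : j = zdx hn := not_not.mp hj; rfl
  right_inv i := rfl

private def eFx {n m : ℕ} (hn : 0 < n) : ({q : Idx n m // ¬ ppred hn q} → ℝ) ≃ᵐ (Fin m → ℝ) :=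
  MeasurableEquiv.piCongrLeft (fun _ : Fin m => ℝ) (eTx hn)

private def Gbig {n m : ℕ} (hn : 0 < n) (b : OrthonormalBasis (Fin n) ℝ (En n)) :
    Enm n m ≃ᵐ (({q : Idx n m // ppred hn q} → ℝ) × (Fin m → ℝ)) :=
  (Pi.orthonormalBasis (fun _ : Fin m => b)).measurableEquiv.trans
    ((MeasurableEquiv.toLp 2 (Idx n m → ℝ)).symm.trans
      ((MeasurableEquiv.piEquivPiSubtypeProd (π := fun _ : Idx n m => ℝ) (ppred hn)).trans
        ((MeasurableEquiv.refl _).prodCongr (eFx hn))))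

private lemma Gbig_fst {n m : ℕ} (hn : 0 < n) (b : OrthonormalBasis (Fin n) ℝ (En n))
    (x : Enm n m) (q : {q : Idx n m // ppred hn q}) :
    (Gbig hn b x).1 q = (Pi.orthonormalBasis (fun _ : Fin m => b)).repr x q.1 := rfl

private lemma Gbig_snd {n m : ℕ} (hn : 0 < n) (b : OrthonormalBasis (Fin n) ℝ (En n))
    (x : Enm n m) (i : Fin m) :
    (Gbig hn b x).2 i = (Pi.orthonormalBasis (fun _ : Fin m => b)).repr x ⟨i, zdx hn⟩ := by
  have h0 : ¬ ppred hn (⟨i, zdx hn⟩ : Idx n m) := by simp [ppred]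
  have h1 : (Gbig hn b x).2 = Equiv.piCongrLeft (fun _ : Fin m => ℝ) (eTx hn)
      (fun q => (Pi.orthonormalBasis (fun _ : Fin m => b)).repr x q.1) := rfl
  rw [h1]
  exact Equiv.piCongrLeft_apply_apply (fun _ : Fin m => ℝ) (eTx hn)
    (fun q => (Pi.orthonormalBasis (fun _ : Fin m => b)).repr x q.1) ⟨⟨i, zdx hn⟩, h0⟩

private lemma Gbig_mp {n m : ℕ} (hn : 0 < n) (b : OrthonormalBasis (Fin n) ℝ (En n)) :
    MeasurePreserving (⇑(Gbig (n := n) (m := m) hn b)) volume volume := by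
  have h1 : MeasurePreserving (⇑(Pi.orthonormalBasis (fun _ : Fin m => b)).measurableEquiv)
      (volume : Measure (Enm n m)) volume :=
    OrthonormalBasis.measurePreserving_measurableEquiv _
  have h2 : MeasurePreserving (⇑(MeasurableEquiv.toLp 2 (Idx n m → ℝ)).symm) volume volume :=
    EuclideanSpace.volume_preserving_symm_measurableEquiv_toLp _
  have h3 : MeasurePreserving
      (⇑(MeasurableEquiv.piEquivPiSubtypeProd (π := fun _ : Idx n m => ℝ) (ppred hn)))
      volume volume :=
    volume_preserving_piEquivPiSubtypeProd (fun _ : Idx n m => ℝ) (ppred hn)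
  have hF : MeasurePreserving (⇑(eFx (n := n) (m := m) hn)) volume volume :=
    volume_measurePreserving_piCongrLeft (fun _ : Fin m => ℝ) (eTx hn)
  have h4 : MeasurePreserving
      (⇑((MeasurableEquiv.refl ({q : Idx n m // ppred hn q} → ℝ)).prodCongr
        (eFx (n := n) (m := m) hn)))
      volume volume := by
    have h := (MeasurePreserving.id (volume : Measure ({q : Idx n m // ppred hn q} → ℝ))).prod hF
    rw [← Measure.volume_eq_prod, ← Measure.volume_eq_prod] at h
    exact h
  exact ((h4.comp h3).comp h2).comp h1


/-- higher-order Steiner symmetrization does not decrease volume: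
`Vol_{nm}(S̄_ξ L) ≥ Vol_{nm}(L)`. -/
theorem steinerM_volume_ge (n m : ℕ) (hn : 0 < n) (hm : 0 < m)
    (L : Set (Enm n m)) (hL₁ : IsCompact L) (hL₂ : (interior L).Nonempty)
    (ξ : En n) (hξ : ‖ξ‖ = 1) :
    volume L ≤ volume (steinerM ξ L) := by
  classical
  -- set up an orthonormal basis with `b (zdx hn) = ξ`
  have hxx : ⟪ξ, ξ⟫ = 1 := by
    rw [real_inner_self_eq_norm_mul_norm, hξ, mul_one]
  have hset : Orthonormal ℝ (({zdx hn} : Set (Fin n)).restrict (fun _ : Fin n => ξ)) := by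
    constructor
    · intro i; exact hξ
    · intro i j hij
      exact absurd (Subsingleton.elim i j) hij
  obtain ⟨b, hb⟩ := hset.exists_orthonormalBasis_extension_of_card_eq
    (by rw [finrank_euclideanSpace_fin, Fintype.card_fin])
  have hbz : b (zdx hn) = ξ := hb (zdx hn) rfl
  set B := Pi.orthonormalBasis (fun _ : Fin m => b) with hBdef
  set G := Gbig (n := n) (m := m) hn b with hGdef
  have hG : MeasurePreserving (⇑G) volume volume := Gbig_mp hn b
  have hreprB : ∀ (x : Enm n m) (q : Idx n m), B.repr x q = ⟪b q.2, x q.1⟫ := by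
    intro x q
    rw [Pi.orthonormalBasis_repr]
    exact b.repr_apply_apply _ _
  -- compactness of the Steiner symmetral
  set f : Enm n m × Enm n m → Enm n m :=
    fun p => (WithLp.toLp 2 (fun i => p.1 i - ((⟪p.1 i, ξ⟫ + ⟪p.2 i, ξ⟫)/2) • ξ) : Enm n m) with hfdef
  set C : Set (Enm n m × Enm n m) :=
    (L ×ˢ L) ∩ {p | ∀ i, p.1 i - ⟪p.1 i, ξ⟫ • ξ = p.2 i - ⟪p.2 i, ξ⟫ • ξ} with hCdef
  have hev1 : ∀ i : Fin m, Continuous fun p : Enm n m × Enm n m => p.1 i :=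
    fun i => (PiLp.continuous_apply 2 _ i).comp continuous_fst
  have hev2 : ∀ i : Fin m, Continuous fun p : Enm n m × Enm n m => p.2 i :=
    fun i => (PiLp.continuous_apply 2 _ i).comp continuous_snd
  have hfc : Continuous f := by
    refine (PiLp.continuous_toLp 2 _).comp ?_
    apply continuous_pi
    intro i
    exact ((hev1 i).sub ((((((hev1 i).inner (𝕜 := ℝ) continuous_const)).add
      (((hev2 i).inner (𝕜 := ℝ) continuous_const))).div_const 2).smul continuous_const))
  have hCc : IsCompact C := by
    have hseteq : {p : Enm n m × Enm n m | ∀ i, p.1 i - ⟪p.1 i, ξ⟫ • ξ = p.2 i - ⟪p.2 i, ξ⟫ • ξ}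
        = ⋂ i, {p : Enm n m × Enm n m | p.1 i - ⟪p.1 i, ξ⟫ • ξ = p.2 i - ⟪p.2 i, ξ⟫ • ξ} := by
      ext p; simp [Set.mem_iInter]
    rw [hCdef, hseteq]
    refine (hL₁.prod hL₁).inter_right (isClosed_iInter fun i => isClosed_eq ?_ ?_)
    · exact (hev1 i).sub ((((hev1 i).inner (𝕜 := ℝ) continuous_const)).smul continuous_const)
    · exact (hev2 i).sub ((((hev2 i).inner (𝕜 := ℝ) continuous_const)).smul continuous_const)
  have hip : ∀ (w : En n) (c : ℝ), ⟪w + c • ξ, ξ⟫ = ⟪w, ξ⟫ + c := by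
    intro w c
    rw [inner_add_left, real_inner_smul_left, hxx, mul_one]
  have him : steinerM ξ L = f '' C := by
    apply Set.Subset.antisymm
    · rintro z ⟨w, t, s, hw, hx, hy, hz⟩
      refine ⟨(WithLp.toLp 2 (fun i => w i + t i • ξ), WithLp.toLp 2 (fun i => w i + s i • ξ)),
        ⟨⟨hx, hy⟩, ?_⟩, ?_⟩
      · intro i
        dsimp only [WithLp.ofLp_toLp]
        rw [hip (w i) (t i), hip (w i) (s i), hw i, zero_add, zero_add,
          add_sub_cancel_right, add_sub_cancel_right]
      · apply WithLp.ofLp_injective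
        rw [hz]
        funext i
        show (w i + t i • ξ) - ((⟪w i + t i • ξ, ξ⟫ + ⟪w i + s i • ξ, ξ⟫)/2) • ξ
          = w i + ((t i - s i)/2) • ξ
        rw [hip (w i) (t i), hip (w i) (s i), hw i, zero_add, zero_add,
          add_sub_assoc, ← sub_smul]
        have : t i - (t i + s i)/2 = (t i - s i)/2 := by ring
        rw [this]
    · rintro _ ⟨⟨x, y⟩, ⟨hprod, hC⟩, rfl⟩
      have hxL : x ∈ L := hprod.1
      have hyL : y ∈ L := hprod.2
      refine ⟨fun i => x i - ⟪x i, ξ⟫ • ξ, fun i => ⟪x i, ξ⟫, fun i => ⟪y i, ξ⟫, ?_, ?_, ?_, ?_⟩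
      · intro i
        rw [inner_sub_left, real_inner_smul_left, hxx, mul_one, sub_self]
      · have : (WithLp.toLp 2 (fun i => (x i - ⟪x i, ξ⟫ • ξ) + ⟪x i, ξ⟫ • ξ) : Enm n m) = x := by
          apply WithLp.ofLp_injective; exact funext fun i => sub_add_cancel _ _
        rw [this]; exact hxL
      · have : (WithLp.toLp 2 (fun i => (x i - ⟪x i, ξ⟫ • ξ) + ⟪y i, ξ⟫ • ξ) : Enm n m) = y := by
          apply WithLp.ofLp_injective; exact funext fun i => by dsimp only [WithLp.ofLp_toLp]; rw [hC i]; exact sub_add_cancel _ _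
        rw [this]; exact hyL
      · funext i
        show x i - ((⟪x i, ξ⟫ + ⟪y i, ξ⟫)/2) • ξ
          = (x i - ⟪x i, ξ⟫ • ξ) + ((⟪x i, ξ⟫ - ⟪y i, ξ⟫)/2) • ξ
        have hsc : (⟪x i, ξ⟫ + ⟪y i, ξ⟫)/2 = ⟪x i, ξ⟫ - (⟪x i, ξ⟫ - ⟪y i, ξ⟫)/2 := by ring
        rw [hsc, sub_smul]
        abel
  have hScomp : IsCompact (steinerM ξ L) := him ▸ hCc.image hfc
  -- transfer to the product picture
  set K' := ⇑G '' L with hK'def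
  set S' := ⇑G '' (steinerM ξ L) with hS'def
  have hK'm : MeasurableSet K' := by
    rw [hK'def, MeasurableEquiv.image_eq_preimage_symm]
    exact G.symm.measurable hL₁.measurableSet
  have hS'm : MeasurableSet S' := by
    rw [hS'def, MeasurableEquiv.image_eq_preimage_symm]
    exact G.symm.measurable hScomp.measurableSet
  have hvolK : volume K' = volume L := by
    rw [hK'def, MeasurableEquiv.image_eq_preimage_symm]
    exact (hG.symm G).measure_preimage hL₁.measurableSet.nullMeasurableSet
  have hvolS : volume S' = volume (steinerM ξ L) := by
    rw [hS'def, MeasurableEquiv.image_eq_preimage_symm]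
    exact (hG.symm G).measure_preimage hScomp.measurableSet.nullMeasurableSet
  -- the fiberwise condition
  have hcond : ∀ (w : {q : Idx n m // ppred hn q} → ℝ) (t s : Fin m → ℝ),
      (w, t) ∈ K' → (w, s) ∈ K' → (w, fun j => (t j - s j)/2) ∈ S' := by
    intro w t s hwt hws
    obtain ⟨x, hxL, hxG⟩ := hwt
    obtain ⟨y, hyL, hyG⟩ := hws
    have hx1 : (G x).1 = w := by rw [hxG]
    have hx2 : (G x).2 = t := by rw [hxG]
    have hy1 : (G y).1 = w := by rw [hyG]
    have hy2 : (G y).2 = s := by rw [hyG]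
    have hti : ∀ i, t i = ⟪ξ, x i⟫ := by
      intro i
      rw [← hx2, Gbig_snd, hreprB, hbz]
    have hsi : ∀ i, s i = ⟪ξ, y i⟫ := by
      intro i
      rw [← hy2, Gbig_snd, hreprB, hbz]
    have hoffeq : ∀ (i : Fin m) (j : Fin n), j ≠ zdx hn → b.repr (x i) j = b.repr (y i) j := by
      intro i j hj
      have hq : ppred hn (⟨i, j⟩ : Idx n m) := hj
      have e1 : B.repr x ⟨i, j⟩ = w ⟨⟨i, j⟩, hq⟩ := by
        rw [← hx1]; exact (Gbig_fst hn b x ⟨⟨i, j⟩, hq⟩).symm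
      have e2 : B.repr y ⟨i, j⟩ = w ⟨⟨i, j⟩, hq⟩ := by
        rw [← hy1]; exact (Gbig_fst hn b y ⟨⟨i, j⟩, hq⟩).symm
      have e3 : B.repr x ⟨i, j⟩ = b.repr (x i) j := Pi.orthonormalBasis_repr _ _ _
      have e4 : B.repr y ⟨i, j⟩ = b.repr (y i) j := Pi.orthonormalBasis_repr _ _ _
      rw [← e3, ← e4, e1, e2]
    have hperp : ∀ i, x i - ⟪ξ, x i⟫ • ξ = y i - ⟪ξ, y i⟫ • ξ := by
      intro i
      apply b.repr.injective
      ext j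
      rw [map_sub, map_sub, LinearIsometryEquiv.map_smul, LinearIsometryEquiv.map_smul, ← hbz,
        b.repr_self]
      show b.repr (x i) j - ⟪b (zdx hn), x i⟫ • (EuclideanSpace.single (zdx hn) 1) j
        = b.repr (y i) j - ⟪b (zdx hn), y i⟫ • (EuclideanSpace.single (zdx hn) 1) j
      rw [EuclideanSpace.single_apply]
      by_cases hj : j = zdx hn
      · subst hj
        simp only [if_pos rfl, smul_eq_mul, mul_one]
        rw [← b.repr_apply_apply, ← b.repr_apply_apply]
        simp
      · simp only [if_neg hj, smul_eq_mul, mul_zero, sub_zero]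
        exact hoffeq i j hj
    set z' : Enm n m :=
      (WithLp.toLp 2 (fun i => (x i - ⟪ξ, x i⟫ • ξ) + ((⟪ξ, x i⟫ - ⟪ξ, y i⟫)/2) • ξ) : Enm n m) with hz'def
    have hz'mem : z' ∈ steinerM ξ L := by
      refine ⟨fun i => x i - ⟪ξ, x i⟫ • ξ, fun i => ⟪ξ, x i⟫, fun i => ⟪ξ, y i⟫, ?_, ?_, ?_, rfl⟩
      · intro i
        rw [inner_sub_left, real_inner_smul_left, hxx, mul_one, real_inner_comm, sub_self]
      · have : (WithLp.toLp 2 (fun i => (x i - ⟪ξ, x i⟫ • ξ) + ⟪ξ, x i⟫ • ξ) : Enm n m) = x := by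
          apply WithLp.ofLp_injective; exact funext fun i => sub_add_cancel _ _
        rw [this]; exact hxL
      · have : (WithLp.toLp 2 (fun i => (x i - ⟪ξ, x i⟫ • ξ) + ⟪ξ, y i⟫ • ξ) : Enm n m) = y := by
          apply WithLp.ofLp_injective; exact funext fun i => by dsimp only [WithLp.ofLp_toLp]; rw [hperp i]; exact sub_add_cancel _ _
        rw [this]; exact hyL
    have hbj0 : ∀ j : Fin n, j ≠ zdx hn → ⟪b j, ξ⟫ = 0 := by
      intro j hj
      rw [← hbz]
      exact b.orthonormal.2 hj
    have hGz' : G z' = (w, fun j => (t j - s j)/2) := by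
      have h1 : (G z').1 = w := by
        funext q
        obtain ⟨⟨i, j⟩, hq⟩ := q
        rw [Gbig_fst, hreprB]
        show ⟪b j, z' i⟫ = w ⟨⟨i, j⟩, hq⟩
        have hqj : (j : Fin n) ≠ zdx hn := hq
        rw [hz'def]
        show ⟪b j, (x i - ⟪ξ, x i⟫ • ξ) + ((⟪ξ, x i⟫ - ⟪ξ, y i⟫)/2) • ξ⟫ = w ⟨⟨i, j⟩, hq⟩
        rw [inner_add_right, inner_sub_right, real_inner_smul_right, real_inner_smul_right,
          hbj0 j hqj, mul_zero, mul_zero, sub_zero, add_zero]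
        have e1 : B.repr x ⟨i, j⟩ = w ⟨⟨i, j⟩, hq⟩ := by
          rw [← hx1]; exact (Gbig_fst hn b x ⟨⟨i, j⟩, hq⟩).symm
        rw [← e1, hreprB]
      have h2 : (G z').2 = fun j => (t j - s j)/2 := by
        funext i
        rw [Gbig_snd, hreprB, hbz]
        show ⟪ξ, z' i⟫ = (t i - s i)/2
        rw [hz'def]
        show ⟪ξ, (x i - ⟪ξ, x i⟫ • ξ) + ((⟪ξ, x i⟫ - ⟪ξ, y i⟫)/2) • ξ⟫ = (t i - s i)/2
        rw [inner_add_right, inner_sub_right, real_inner_smul_right, real_inner_smul_right,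
          hxx, mul_one, mul_one, hti i, hsi i]
        ring
      calc G z' = ((G z').1, (G z').2) := rfl
        _ = (w, fun j => (t j - s j)/2) := by rw [h1, h2]
    exact ⟨z', hz'mem, hGz'⟩
  calc volume L = volume K' := hvolK.symm
    _ ≤ volume S' := prod_slice hK'm hS'm hcond
    _ = volume (steinerM ξ L) := hvolS
end
end
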